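/- arXiv:2006.05878 — 11 statements merged into one kernel-verified Lean document; each statement's English description precedes it below -/
import Mathlib

section
/- Any two strings in the set V^{i,(k)} = {1^k 0 u 1 0^k : the string 0u1 avoids both factors 0^k and 1^k} (strings of a fixed length i ≥ 2k+2 over {0,1}, with k ≥ 3) are non-overlapping: no proper nonempty prefix of one equals a proper nonempty suffix of the other. -/
open List

/-- `w` avoids `p` as a consecutive factor. -/
def Avoids (p w : List Bool) : Prop := ¬ p <:+: w

/-- The set `V^{i,(k)}` of binary strings `1^k 0 u 1 0^k` of length `i`
where `0u1` avoids `0^k` and `1^k` as factors (`true` plays the role of `1`). -/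
def Vik (k i : ℕ) : Set (List Bool) :=
  {w | ∃ u : List Bool,
      w = List.replicate k true ++ ([false] ++ u ++ [true]) ++ List.replicate k false ∧
      w.length = i ∧
      Avoids (List.replicate k false) ([false] ++ u ++ [true]) ∧
      Avoids (List.replicate k true) ([false] ++ u ++ [true])}

/-- `u` and `v` are non-overlapping (in the direction prefix-of-`u` /
suffix-of-`v`): no proper nonempty prefix of `u` equals a proper nonempty
suffix of `v`. -/
def CrossBF (u v : List Bool) : Prop :=
  ∀ p : List Bool, p ≠ [] → p ≠ u → p ≠ v → ¬(p <+: u ∧ p <:+ v)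

/-- No occurrence of `1^k` at a positive offset inside `1^k ++ (0b1) ++ 0^k`. -/
lemma no_inner (k : ℕ) (hk : 1 ≤ k) (b s t : List Bool)
    (hAv : ¬ List.replicate k true <:+: ([false] ++ b ++ [true]))
    (hs : s ≠ [])
    (heq : s ++ (List.replicate k true ++ t)
        = List.replicate k true ++ ([false] ++ b ++ [true]) ++ List.replicate k false) :
    False := by
  set m : List Bool := [false] ++ b ++ [true] with hm
  have hslen : 1 ≤ s.length := by
    cases s with
    | nil => exact absurd rfl hs
    | cons a l => simp
  by_cases hsk : s.length ≤ k
  · -- s is a prefix of 1^k, so v starts with too many trues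
    have hsp : s <+: List.replicate k true := by
      refine List.prefix_of_prefix_length_le (l₃ := s ++ (List.replicate k true ++ t)) ?_ ?_ ?_
      · exact ⟨(List.replicate k true ++ t), rfl⟩
      · exact ⟨m ++ List.replicate k false, by rw [heq]; simp [append_assoc]⟩
      · simpa using hsk
    have hsrep : s = List.replicate s.length true := by
      apply List.eq_replicate_of_mem
      intro x hx
      exact (List.mem_replicate.mp (hsp.subset hx)).2
    rw [hsrep, ← append_assoc, ← List.replicate_add] at heq
    have hadd : s.length + k = k + s.length := Nat.add_comm _ _
    rw [hadd, List.replicate_add, append_assoc] at heq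
    have heq2 : List.replicate s.length true ++ t = m ++ List.replicate k false := by
      rw [append_assoc] at heq
      exact List.append_cancel_left heq
    obtain ⟨n, hn⟩ : ∃ n, s.length = n + 1 := ⟨s.length - 1, by omega⟩
    rw [hn, List.replicate_succ] at heq2
    simp [hm] at heq2
  · push_neg at hsk
    by_cases htk : k ≤ t.length
    · -- trailing 0^k is a suffix of t; cancel it; get 1^k inside m
      have htv : t <:+ s ++ (List.replicate k true ++ t) :=
        (List.suffix_append _ t).trans (List.suffix_append _ _)
      have hz : List.replicate k false <:+ s ++ (List.replicate k true ++ t) := by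
        rw [heq]; exact List.suffix_append _ _
      have h0t : List.replicate k false <:+ t :=
        List.suffix_of_suffix_length_le hz htv (by simpa using htk)
      obtain ⟨t', ht'⟩ := h0t
      rw [← ht'] at heq
      have heq2 : s ++ (List.replicate k true ++ t')
          = List.replicate k true ++ m := by
        apply List.append_cancel_right (bs := List.replicate k false)
        simpa [append_assoc] using heq
      -- 1^k ++ t' is a suffix of 1^k ++ m, shorter than m
      have hsuf : List.replicate k true ++ t' <:+ List.replicate k true ++ m :=
        ⟨s, by simpa [append_assoc] using heq2⟩
      have hlen : (List.replicate k true ++ t').length ≤ m.length := by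
        have := congrArg List.length heq2
        simp at this ⊢
        omega
      have hsuf2 : List.replicate k true ++ t' <:+ m :=
        List.suffix_of_suffix_length_le hsuf (List.suffix_append _ _) hlen
      obtain ⟨pre, hpre⟩ := hsuf2
      exact hAv ⟨pre, t', by rw [← hpre]; simp [append_assoc]⟩
    · -- t short: the last `true` of the 1^k block lands in the trailing 0^k
      push_neg at htk
      have h1t : (true :: t) <:+ s ++ (List.replicate k true ++ t) := by
        refine IsSuffix.trans ?_ (List.suffix_append _ _)
        obtain ⟨n, hn⟩ : ∃ n, k = n + 1 := ⟨k - 1, by omega⟩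
        exact ⟨List.replicate n true, by rw [hn, List.replicate_succ']; simp⟩
      have hz : List.replicate k false <:+ s ++ (List.replicate k true ++ t) := by
        rw [heq]; exact List.suffix_append _ _
      have : (true :: t) <:+ List.replicate k false :=
        List.suffix_of_suffix_length_le h1t hz (by simp; omega)
      have := this.subset (List.mem_cons_self (a := true) (l := t))
      simp [List.mem_replicate] at this

/-- Any two strings of `V^{i,(k)}` (`k ≥ 3`, `i ≥ 2k+2`) are non-overlapping. -/
theorem stmt_0 (k i : ℕ) (hk : 3 ≤ k) (hi : 2 * k + 2 ≤ i)
    (u v : List Bool) (hu : u ∈ Vik k i) (hv : v ∈ Vik k i) :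
    CrossBF u v := by
  obtain ⟨a, hueq, hulen, -, -⟩ := hu
  obtain ⟨b, hveq, hvlen, -, hbAv⟩ := hv
  intro p hpne hpu hpv ⟨hp1, hp2⟩
  have h1u : List.replicate k true <+: u :=
    ⟨([false] ++ a ++ [true]) ++ List.replicate k false, by simp [hueq, append_assoc]⟩
  by_cases hpk : p.length ≤ k
  · -- p all true as prefix of 1^k, but suffix of 0^k
    have hpp : p <+: List.replicate k true :=
      List.prefix_of_prefix_length_le hp1 h1u (by simpa using hpk)
    have h0v : List.replicate k false <:+ v :=
      ⟨List.replicate k true ++ ([false] ++ b ++ [true]), by simp [hveq, append_assoc]⟩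
    have hps : p <:+ List.replicate k false :=
      List.suffix_of_suffix_length_le hp2 h0v (by simpa using hpk)
    obtain ⟨x, hx⟩ := List.exists_mem_of_ne_nil p hpne
    have h1 : x = true := (List.mem_replicate.mp (hpp.subset hx)).2
    have h2 : x = false := (List.mem_replicate.mp (hps.subset hx)).2
    rw [h1] at h2; exact Bool.true_eq_false.mp h2
  · push_neg at hpk
    have h1p : List.replicate k true <+: p :=
      List.prefix_of_prefix_length_le h1u hp1 (by simp; omega)
    obtain ⟨t, ht⟩ := h1p
    obtain ⟨s, hsv⟩ := hp2
    have hs : s ≠ [] := by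
      intro h
      rw [h, List.nil_append] at hsv
      exact hpv hsv
    refine no_inner k (by omega) b s t hbAv hs ?_
    rw [ht, hsv, hveq]
end

section
/- For k ≥ 3 and n ≥ 2k+2, the set 𝒱_n^{(k)} = ⋃_{i=2k+2}^{n} V^{i,(k)} is a non-overlapping (cross-bifix-free) set of strings: for any two (possibly equal) elements u, v of 𝒱_n^{(k)}, no proper nonempty prefix of u equals a proper nonempty suffix of v. -/
open List

/-- `𝒱_n^{(k)}`, the union of the `V^{i,(k)}` for `2k+2 ≤ i ≤ n`. -/
def Vset (k n : ℕ) : Set (List Bool) :=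
  {w | ∃ i : ℕ, 2 * k + 2 ≤ i ∧ i ≤ n ∧ w ∈ Vik k i}

/-- A list `true :: xs` occurring as a factor of `replicate n false ++ y`
must occur in `y`. -/
lemma straddle {n : ℕ} {s t y xs : List Bool}
    (h : s ++ ((true :: xs) ++ t) = List.replicate n false ++ y) :
    (true :: xs) <:+: y := by
  rcases List.append_eq_append_iff.mp h with ⟨a, ha1, ha2⟩ | ⟨a, ha1, ha2⟩
  · cases a with
    | nil => exact ⟨[], t, by simpa using ha2⟩
    | cons hd tl =>
      have hmem : hd ∈ List.replicate n false := by rw [ha1]; simp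
      have : hd = false := (List.mem_replicate.mp hmem).2
      simp [this] at ha2
  · exact ⟨a, t, by rw [ha2, List.append_assoc]⟩

/-- `1^k` cannot occur as a factor of `β ++ 0^k` if `β` avoids `1^k`. -/
lemma lemA {k : ℕ} {β : List Bool} (hβ : Avoids (List.replicate k true) β)
    (hk : 1 ≤ k) : ¬ List.replicate k true <:+: β ++ List.replicate k false := by
  rintro ⟨s, t, h⟩
  have hrev : t.reverse ++ ((List.replicate k true) ++ s.reverse)
      = List.replicate k false ++ β.reverse := by
    have := congrArg List.reverse h
    simpa [List.reverse_append, List.append_assoc] using this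
  obtain ⟨m, rfl⟩ : ∃ m, k = m + 1 := ⟨k - 1, by omega⟩
  rw [List.replicate_succ] at hrev
  have h2 : (true :: List.replicate m true) <:+: β.reverse := straddle hrev
  have h3 : List.replicate (m + 1) true <:+: β := by
    rw [← List.reverse_infix, List.reverse_replicate]
    simpa [List.replicate_succ] using h2
  exact hβ h3

/-- `𝒱_n^{(k)}` is a non-overlapping (cross-bifix-free) set of strings. -/
theorem stmt_1 (k n : ℕ) (hk : 3 ≤ k) (hn : 2 * k + 2 ≤ n)
    (u v : List Bool) (hu : u ∈ Vset k n) (hv : v ∈ Vset k n) :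
    CrossBF u v := by
  rintro p hpne hpu hpv ⟨hpre, hsuf⟩
  obtain ⟨i, hi1, hi2, a, hua, hulen, huav0, huav1⟩ := hu
  obtain ⟨j, hj1, hj2, b, hvb, hvlen, hvav0, hvav1⟩ := hv
  have hplen : p.length ≠ 0 := by simpa using hpne
  rcases le_or_gt p.length k with hm | hm
  · -- short case: p is all-true (prefix of u) and all-false (suffix of v)
    have h1 : p <+: List.replicate k true := by
      refine List.prefix_of_prefix_length_le hpre ?_ (by simpa using hm)
      rw [hua]
      exact ⟨([false] ++ a ++ [true]) ++ List.replicate k false, by simp [List.append_assoc]⟩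
    have h2 : p <:+ List.replicate k false := by
      refine List.suffix_of_suffix_length_le hsuf ?_ (by simpa using hm)
      rw [hvb]
      exact ⟨List.replicate k true ++ ([false] ++ b ++ [true]), by simp [List.append_assoc]⟩
    have e1 : p = List.replicate p.length true :=
      List.eq_replicate_of_mem fun x hx => (List.mem_replicate.mp (h1.sublist.subset hx)).2
    have e2 : p = List.replicate p.length false :=
      List.eq_replicate_of_mem fun x hx => (List.mem_replicate.mp (h2.sublist.subset hx)).2
    have : (true : Bool) ∈ p := e1 ▸ List.mem_replicate.mpr ⟨hplen, rfl⟩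
    rw [e2] at this
    exact absurd (List.mem_replicate.mp this).2 (by simp)
  · -- long case: p starts with 1^k 0
    obtain ⟨s, hs⟩ := hsuf
    have hsne : s ≠ [] := by
      intro h
      rw [h, List.nil_append] at hs
      exact hpv hs
    have hc : (List.replicate k true ++ [false]) <+: p := by
      refine List.prefix_of_prefix_length_le ?_ hpre ?_
      · rw [hua]
        exact ⟨a ++ [true] ++ List.replicate k false, by simp [List.append_assoc]⟩
      · simp; omega
    obtain ⟨t', ht'⟩ := hc
    have hv2 : v = List.replicate k true ++ (([false] ++ b ++ [true]) ++ List.replicate k false) := by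
      rw [hvb]; simp [List.append_assoc]
    have key : s ++ (List.replicate k true ++ ([false] ++ t'))
        = List.replicate k true ++ (([false] ++ b ++ [true]) ++ List.replicate k false) := by
      rw [← hv2, ← hs, ← ht']; simp [List.append_assoc]
    rcases List.append_eq_append_iff.mp key with ⟨a', ha1, ha2⟩ | ⟨a', ha1, ha2⟩
    · -- the 1^k-block of p starts inside the 1^k-block of v: forces s = []
      have ha'r : a' = List.replicate a'.length true :=
        List.eq_replicate_of_mem fun x hx =>
          (List.mem_replicate.mp (by rw [ha1]; exact List.mem_append_right _ hx : x ∈ List.replicate k true)).2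
      have hlen : s.length + a'.length = k := by
        have := congrArg List.length ha1; simp at this; omega
      have hsl : 1 ≤ s.length := List.length_pos_iff.mpr hsne
      have hrep : List.replicate k true = a' ++ List.replicate s.length true := by
        rw [ha'r, ← List.replicate_add]
        congr 1
        omega
      rw [hrep, List.append_assoc] at ha2
      have ha3 := List.append_cancel_left ha2
      obtain ⟨m, hm'⟩ : ∃ m, s.length = m + 1 := ⟨s.length - 1, by omega⟩
      rw [hm', List.replicate_succ] at ha3
      simp at ha3
    · -- 1^k occurs inside 0b1 ++ 0^k: contradiction with lemA
      have hinf : List.replicate k true <:+: ([false] ++ b ++ [true]) ++ List.replicate k false :=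
        ⟨a', [false] ++ t', by rw [ha2]; simp [List.append_assoc]⟩
      exact lemA hvav1 (by omega) hinf
end

section
/- For k ≥ 3 and n ≥ 2k+2, no string of 𝒱_n^{(k)} occurs as a factor (consecutive substring) of a different string of 𝒱_n^{(k)}; indeed no string of 𝒱_n^{(k)} is a proper factor of any string of 𝒱_n^{(k)}. -/
open List

lemma keyA (k : ℕ) (hk : 1 ≤ k) (b : Bool) (m s t : List Bool)
    (hm0 : m.head? = some (!b))
    (hav : ¬ (List.replicate k b <:+: m))
    (heq : s ++ (List.replicate k b ++ t)
         = List.replicate k b ++ (m ++ List.replicate k (!b))) :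
    s = [] := by
  set R := List.replicate k b with hR
  set F := List.replicate k (!b) with hF
  obtain ⟨a, m', rfl⟩ : ∃ a m', m = a :: m' := by
    cases m with
    | nil => simp at hm0
    | cons a m' => exact ⟨a, m', rfl⟩
  have ha : a = !b := by simpa using hm0
  subst ha
  by_contra hs
  have hs1 : 1 ≤ s.length := List.length_pos_iff.mpr hs
  have hlen := congrArg List.length heq
  simp [hR, hF] at hlen
  rcases le_or_gt s.length k with h1 | h2
  · -- index k
    have hkl : k < (s ++ (R ++ t)).length := by
      rw [heq]; simp only [List.length_append, List.length_replicate, List.length_cons, hR, hF]; omega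
    have hL : (s ++ (R ++ t))[k] = b := by
      rw [List.getElem_append_right (by omega)]
      rw [List.getElem_append_left (by simp [hR]; omega)]
      exact List.getElem_replicate _
    have hR' : (R ++ ((((!b) :: m')) ++ F))[k]'(by rw [← heq]; exact hkl) = !b := by
      rw [List.getElem_append_right (by simp [hR])]
      simp [hR]
    have heqk := List.getElem_of_eq heq hkl
    rw [hL, hR'] at heqk
    simp at heqk
  · -- s.length > k : s = R ++ s'
    have htk : s.take k = R := by
      have := congrArg (List.take k) heq
      simpa [List.take_append, Nat.sub_eq_zero_of_le (le_of_lt h2),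
        hR] using this
    obtain ⟨s', rfl⟩ : ∃ s', s = R ++ s' := ⟨s.drop k, by rw [← htk, List.take_append_drop]⟩
    have heq2 : s' ++ (R ++ t) = (((!b) :: m')) ++ F := by
      have := heq
      rw [List.append_assoc] at this
      exact List.append_cancel_left this
    have hlen2 := congrArg List.length heq2
    simp [hR, hF] at hlen2
    rcases le_or_gt (s'.length + k) (m'.length + 1) with h3 | h4
    · -- R infix of m
      apply hav
      have hpre : s' ++ R <+: (((!b) :: m')) := by
        have p1 : s' ++ R <+: (((!b) :: m')) ++ F := ⟨t, by simpa [List.append_assoc] using heq2⟩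
        have p2 : (((!b) :: m')) <+: (((!b) :: m')) ++ F := ⟨F, rfl⟩
        exact List.prefix_of_prefix_length_le p1 p2 (by simp [hR]; omega)
      obtain ⟨r, hr⟩ := hpre
      exact ⟨s', r, by simpa [List.append_assoc] using hr⟩
    · -- index m.length
      have hsl : s'.length ≤ m'.length + 1 := by omega
      have hjl : m'.length + 1 < (s' ++ (R ++ t)).length := by
        rw [heq2]; simp only [List.length_append, List.length_replicate, List.length_cons, hF]; omega
      have hL : (s' ++ (R ++ t))[m'.length + 1] = b := by
        rw [List.getElem_append_right (by omega)]
        rw [List.getElem_append_left (by simp [hR]; omega)]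
        exact List.getElem_replicate _
      have hRr : ((((!b) :: m')) ++ F)[m'.length + 1]'(by rw [← heq2]; exact hjl) = !b := by
        rw [List.getElem_append_right (by simp)]
        simp [hF]
      have heqk := List.getElem_of_eq heq2 hjl
      rw [hL, hRr] at heqk
      simp at heqk

lemma keyB (k : ℕ) (hk : 1 ≤ k) (b : Bool) (m s t : List Bool)
    (hm0 : m.reverse.head? = some b)
    (hav : ¬ (List.replicate k (!b) <:+: m))
    (heq : s ++ (List.replicate k (!b) ++ t)
         = List.replicate k b ++ (m ++ List.replicate k (!b))) :
    t = [] := by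
  have hrev := congrArg List.reverse heq
  simp only [List.reverse_append, List.reverse_replicate] at hrev
  have := keyA k hk (!b) m.reverse t.reverse s.reverse
    (by simpa using hm0)
    (by rw [← List.reverse_infix] at hav; simpa using hav)
    (by rw [Bool.not_not]; simpa [List.append_assoc] using hrev)
  simpa using this

/-- No string of `𝒱_n^{(k)}` is a proper factor of a string of `𝒱_n^{(k)}`. -/
theorem stmt_2 (k n : ℕ) (hk : 3 ≤ k) (hn : 2 * k + 2 ≤ n)
    (u v : List Bool) (hu : u ∈ Vset k n) (hv : v ∈ Vset k n)
    (hfac : u <:+: v) : u = v := by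
  obtain ⟨i, _, _, uu, hueq, _, _, _⟩ := hu
  obtain ⟨j, _, _, vv, hveq, _, hvF, hvT⟩ := hv
  obtain ⟨s, t, hst⟩ := hfac
  have hk1 : 1 ≤ k := by omega
  set mu : List Bool := [false] ++ uu ++ [true] with hmu
  set mv : List Bool := [false] ++ vv ++ [true] with hmv
  subst hueq hveq
  have hst' : s ++ (List.replicate k true ++ (mu ++ (List.replicate k false ++ t)))
      = List.replicate k true ++ (mv ++ List.replicate k false) := by
    simpa [List.append_assoc] using hst
  have hs0 : s = [] := keyA k hk1 true mv s (mu ++ (List.replicate k false ++ t))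
    (by simp [hmv]) hvT hst'
  subst hs0
  have hst'' : (List.replicate k true ++ mu) ++ (List.replicate k false ++ t)
      = List.replicate k true ++ (mv ++ List.replicate k false) := by
    simpa [List.append_assoc] using hst
  have ht0 : t = [] := keyB k hk1 true mv (List.replicate k true ++ mu) t
    (by simp [hmv]) hvF hst''
  subst ht0
  simpa [List.append_assoc] using hst
end

section
/- Every string in V^{i,(k)} is self non-overlapping (bifix-free): no proper nonempty prefix of it equals one of its proper nonempty suffixes. -/
open List

/-- Every string of `V^{i,(k)}` is bifix-free (self non-overlapping). -/
theorem stmt_3 (k i : ℕ) (hk : 3 ≤ k) (hi : 2 * k + 2 ≤ i)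
    (w : List Bool) (hw : w ∈ Vik k i) : CrossBF w w := by
  obtain ⟨u, hweq, hlen, hav0, hav1⟩ := hw
  set z : List Bool := [false] ++ u ++ [true] with hzdef
  set A : List Bool := List.replicate k true with hAdef
  set B : List Bool := List.replicate k false with hBdef
  have hAlen : A.length = k := by simp [hAdef]
  have hBlen : B.length = k := by simp [hBdef]
  have hzlen : z.length = u.length + 2 := by simp [hzdef]
  have hwlen : w.length = k + z.length + k := by
    rw [hweq]; simp [hAlen, hBlen]; ring
  intro p hne hpu _ ⟨hpre, hsuf⟩
  have hplenpos : 0 < p.length := List.length_pos_iff.mpr hne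
  have hplenlt : p.length < w.length := by
    rcases lt_or_eq_of_le hpre.length_le with h | h
    · exact h
    · exact absurd (List.IsPrefix.eq_of_length hpre h) hpu
  by_cases hle : p.length ≤ k
  · -- p is a short suffix, hence all false; but its head is true
    have hBsuf : B <:+ w := ⟨A ++ z, by rw [hweq]⟩
    have hpB : p <:+ B := suffix_of_suffix_length_le hsuf hBsuf (by omega)
    have hfalse : p[0] = false :=
      List.eq_of_mem_replicate (hBdef ▸ hpB.sublist.subset (List.getElem_mem _))
    have htrue : p[0] = true := by
      have hw0 : w[0]? = some true := by
        rw [hweq, List.getElem?_append_left (by simp only [List.length_append, hAlen, hzlen]; omega),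
          List.getElem?_append_left (by omega),
          List.getElem?_eq_getElem (by omega : 0 < A.length)]
        simp [hAdef]
      rw [hpre.getElem hplenpos]
      exact Option.some.inj ((List.getElem?_eq_getElem (by omega)).symm.trans hw0)
    rw [htrue] at hfalse; exact Bool.noConfusion hfalse
  · push_neg at hle
    have hApre : A <+: w := by
      rw [hweq]
      exact (List.prefix_append A z).trans (List.prefix_append (A ++ z) B)
    have hAp : A <+: p := prefix_of_prefix_length_le hApre hpre (by omega)
    obtain ⟨r, hr⟩ := hAp
    obtain ⟨d, hd⟩ := hsuf
    have hplen : p.length = k + r.length := by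
      rw [← hr]; simp [hAlen]
    have hdlen : d.length + p.length = w.length := by
      rw [← hd]; simp
    have hdpos : 0 < d.length := by omega
    have E : d ++ (A ++ r) = A ++ z ++ B := by rw [hr, hd, hweq]
    by_cases h1 : d.length ≤ k
    · -- the copied 1-block covers position k, which is false in w
      have hj := congrArg (fun l : List Bool => l[k]?) E
      rw [List.getElem?_append_right (by omega),
        List.getElem?_append_left (by omega),
        List.getElem?_append_left (by simp only [List.length_append, hAlen, hzlen]; omega),
        List.getElem?_append_right (by omega)] at hj
      rw [hAlen] at hj
      have hjl : A[k - d.length]? = some true := by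
        rw [List.getElem?_eq_getElem (by omega : k - d.length < A.length)]
        simp [hAdef]
      have hjr : z[k - k]? = some false := by
        simp [hzdef]
      rw [hjl, hjr] at hj
      exact Bool.noConfusion (Option.some.inj hj)
    · push_neg at h1
      by_cases h2 : z.length < d.length
      · -- the copied 1-block covers a position in the final 0-block
        have hj := congrArg (fun l : List Bool => l[d.length + (k-1)]?) E
        rw [List.getElem?_append_right (by omega),
          List.getElem?_append_left (by omega),
          List.getElem?_append_right (by simp only [List.length_append, hAlen]; omega)] at hj
        rw [show (A ++ z).length = k + z.length from by simp [hAlen]] at hj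
        have hjl : A[d.length + (k-1) - d.length]? = some true := by
          rw [List.getElem?_eq_getElem (by omega : d.length + (k-1) - d.length < A.length)]
          simp [hAdef]
        have hjr : B[d.length + (k-1) - (k + z.length)]? = some false := by
          rw [List.getElem?_eq_getElem (show d.length + (k-1) - (k + z.length) < B.length by omega)]
          simp [hBdef]
        rw [hjl, hjr] at hj
        exact Bool.noConfusion (Option.some.inj hj)
      · -- the copied 1-block lies inside z : contradiction with Avoids
        push_neg at h2
        have ht : d.take k = A := by
          have h' := congrArg (fun l : List Bool => l.take k) E
          rwa [List.take_append_of_le_length (by omega),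
            List.take_append_of_le_length (by simp only [List.length_append, hAlen]; omega),
            List.take_append_of_le_length (by omega),
            List.take_of_length_le (by omega : A.length ≤ k)] at h'
        have hdA : d = A ++ d.drop k := by
          conv_lhs => rw [← List.take_append_drop k d, ht]
        set d' : List Bool := d.drop k with hd'def
        have hd'len : d'.length = d.length - k := by simp [hd'def]
        have E2 : d' ++ (A ++ r) = z ++ B := by
          have h' : A ++ (d' ++ (A ++ r)) = A ++ (z ++ B) := by
            rw [← List.append_assoc, ← hdA, E, List.append_assoc]
          exact List.append_cancel_left h'
        have hz : z = d' ++ (A ++ r.take (z.length - d'.length - k)) := by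
          have h' := congrArg (fun l : List Bool => l.take z.length) E2
          rwa [List.take_append_of_le_length (le_refl z.length),
            List.take_of_length_le (le_refl z.length),
            List.take_append,
            List.take_of_length_le (by omega : d'.length ≤ z.length),
            List.take_append,
            List.take_of_length_le (by simp only [List.length_append, hAlen]; omega : A.length ≤ z.length - d'.length),
            hAlen, eq_comm] at h'
        exact hav1 ⟨d', r.take (z.length - d'.length - k), by
          rw [List.append_assoc]; exact hz.symm⟩
end

section
/- Let r_ℓ^{(k)} be the number of binary strings of length ℓ that start with 0, end with 1, and avoid both 0^k and 1^k as factors (with r_0^{(k)} = 1). Then for ℓ ≥ 1, r_ℓ^{(k)} = (f_{ℓ-1}^{(k-1)} + d_ℓ^{(k)})/2, where f^{(k)} is the k-generalized Fibonacci sequence defined by f_ℓ^{(k)} = 2^ℓ for 0 ≤ ℓ ≤ k−1 and f_ℓ^{(k)} = Σ_{i=1}^{k} f_{ℓ−i}^{(k)} for ℓ ≥ k, and d_ℓ^{(k)} = 1 if ℓ ≡ 0 (mod k), −1 if ℓ ≡ 1 (mod k), and 0 otherwise. -/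
open List

/-- `R_ℓ(0^k,1^k)`: binary strings of length `ℓ` starting with `0`, ending with
`1`, avoiding `0^k` and `1^k` as factors. -/
def Rset (k ℓ : ℕ) : Set (List Bool) :=
  {w | w.length = ℓ ∧ w.head? = some false ∧ w.getLast? = some true ∧
       Avoids (List.replicate k false) w ∧ Avoids (List.replicate k true) w}

lemma head?_replicate_pos {α : Type*} {n : ℕ} (hn : 0 < n) (c : α) :
    (replicate n c).head? = some c := by
  cases n with
  | zero => omega
  | succ m => simp [replicate_succ]

lemma prefix_of_replicate {α : Type*} {l : List α} {n : ℕ} {c : α}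
    (h : l <+: replicate n c) : l = replicate l.length c :=
  eq_replicate_of_mem fun _ hb => eq_of_mem_replicate (h.subset hb)

lemma key_split {α : Type*} {p v s t : List α} {a : ℕ} {c : α}
    (h : s ++ p ++ t = replicate a c ++ v) :
    p <:+: v ∨ (p ++ t = replicate (a - s.length) c ++ v ∧ s.length < a) := by
  rcases le_or_gt a s.length with hs | hs
  · left
    have hdrop : drop a (replicate a c ++ v) = v := by
      simpa using drop_left (replicate a c) v
    have h2 := congrArg (List.drop a) h
    rw [append_assoc, drop_append_of_le_length hs, hdrop] at h2
    exact ⟨s.drop a, t, by rw [append_assoc, h2]⟩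
  · right
    refine ⟨?_, hs⟩
    have hpre : s <+: replicate a c ++ v := ⟨p ++ t, by rw [← append_assoc]; exact h⟩
    have hslen : replicate s.length c = s := by
      have h1 := prefix_iff_eq_take.1 hpre
      rw [take_append_of_le_length (by simp; omega), take_replicate,
        show min s.length a = s.length by omega] at h1
      exact h1.symm
    have h' : replicate s.length c ++ (p ++ t)
        = replicate s.length c ++ (replicate (a - s.length) c ++ v) := by
      calc replicate s.length c ++ (p ++ t) = s ++ p ++ t := by rw [hslen, append_assoc]
        _ = replicate a c ++ v := h
        _ = replicate s.length c ++ (replicate (a - s.length) c ++ v) := by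
            rw [← append_assoc, ← replicate_add]
            congr 2
            omega
    exact append_cancel_left h'

lemma ne_nil_of_head? {α : Type*} {p : List α} {d : α} (hd : p.head? = some d) : p ≠ [] := by
  rintro rfl; simp at hd

lemma infix_run_append_iff {α : Type*} {p v : List α} {c d : α} (hd : p.head? = some d)
    (hdc : d ≠ c) (a : ℕ) : p <:+: (replicate a c ++ v) ↔ p <:+: v := by
  constructor
  · rintro ⟨s, t, h⟩
    rcases key_split h with h1 | ⟨h2, hlt⟩
    · exact h1
    · exfalso
      have hbpos : 0 < a - s.length := by omega
      have hc : (p ++ t).head? = some c := by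
        rw [h2, head?_append_of_ne_nil _ (ne_nil_of_head? (head?_replicate_pos hbpos c)),
          head?_replicate_pos hbpos]
      rw [head?_append_of_ne_nil _ (ne_nil_of_head? hd), hd] at hc
      exact hdc (by injection hc)
  · exact fun h => h.trans (suffix_append _ _).isInfix

lemma replicate_infix_run_append_iff {α : Type*} {v : List α} {c : α} {m : ℕ} (a : ℕ)
    (hv : v.head? ≠ some c) :
    replicate m c <:+: (replicate a c ++ v) ↔ m ≤ a ∨ replicate m c <:+: v := by
  constructor
  · rintro ⟨s, t, h⟩
    rcases key_split h with h1 | ⟨h2, hlt⟩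
    · exact Or.inr h1
    · rcases le_or_gt m (a - s.length) with hmb | hbm
      · exact Or.inl (by omega)
      · exfalso
        have hrep : replicate m c
            = replicate (a - s.length) c ++ replicate (m - (a - s.length)) c := by
          rw [← replicate_add]; congr 1; omega
        rw [hrep, append_assoc] at h2
        have h3 := append_cancel_left h2
        apply hv
        rw [← h3, head?_append_of_ne_nil _
          (ne_nil_of_head? (head?_replicate_pos (by omega) c)),
          head?_replicate_pos (by omega)]
  · rintro (hma | h)
    · have h1 : replicate m c <+: replicate a c :=
        ⟨replicate (a - m) c, by rw [← replicate_add]; congr 1; omega⟩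
      exact (h1.trans (prefix_append _ _)).isInfix
    · exact h.trans (suffix_append _ _).isInfix

lemma avoids_run_append {c : Bool} {a k : ℕ} {v : List Bool} (ha : a < k)
    (hv : v.head? = some (!c)) (h : Avoids (replicate k c) v) :
    Avoids (replicate k c) (replicate a c ++ v) := by
  intro hin
  rcases (replicate_infix_run_append_iff a (by rw [hv]; simp)).1 hin with h1 | h2
  · omega
  · exact h h2

lemma avoids_other_append {c : Bool} {a k : ℕ} {v : List Bool} (hk : 0 < k)
    (h : Avoids (replicate k (!c)) v) :
    Avoids (replicate k (!c)) (replicate a c ++ v) := by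
  intro hin
  exact h ((infix_run_append_iff (head?_replicate_pos hk (!c)) (by simp) a).1 hin)

lemma exists_run (c : Bool) : ∀ (w : List Bool), w.head? = some c →
    ∃ a v, 0 < a ∧ w = replicate a c ++ v ∧ v.head? ≠ some c := by
  intro w
  induction w with
  | nil => intro h; simp at h
  | cons x u ih =>
    intro h
    have hx : x = c := by simpa using h
    by_cases hu : u.head? = some c
    · obtain ⟨a, v, ha, hw, hv⟩ := ih hu
      refine ⟨a + 1, v, by omega, ?_, hv⟩
      rw [add_comm, replicate_add, hx, hw]
      simp
    · exact ⟨1, u, one_pos, by simp [replicate_succ, hx], hu⟩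

lemma run_append_inj_le {c : Bool} {a a' : ℕ} {v v' : List Bool}
    (hv : v.head? ≠ some c) (hle : a ≤ a')
    (h : replicate a c ++ v = replicate a' c ++ v') : a = a' := by
  by_contra hne
  have hrep : replicate a' c = replicate a c ++ replicate (a' - a) c := by
    rw [← replicate_add]; congr 1; omega
  rw [hrep, append_assoc] at h
  have h2 := append_cancel_left h
  apply hv
  rw [h2, head?_append_of_ne_nil _ (ne_nil_of_head? (head?_replicate_pos (by omega) c)),
    head?_replicate_pos (by omega)]

lemma run_append_inj {c : Bool} {a a' : ℕ} {v v' : List Bool}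
    (hv : v.head? ≠ some c) (hv' : v'.head? ≠ some c)
    (h : replicate a c ++ v = replicate a' c ++ v') : a = a' := by
  rcases le_total a a' with hle | hle
  · exact run_append_inj_le hv hle h
  · exact (run_append_inj_le hv' hle h.symm).symm

/-- Strings of length ℓ starting with 1, ending with 1, avoiding 0^k and 1^k. -/
def Tset (k ℓ : ℕ) : Set (List Bool) :=
  {w | w.length = ℓ ∧ w.head? = some true ∧ w.getLast? = some true ∧
       Avoids (List.replicate k false) w ∧ Avoids (List.replicate k true) w}

lemma getLast?_of_append_ne_nil {v : List Bool} (l : List Bool) (hv : v ≠ []) :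
    (l ++ v).getLast? = v.getLast? := by
  rw [getLast?_append]
  obtain ⟨x, hx⟩ := Option.isSome_iff_exists.1 (getLast?_isSome.2 hv)
  rw [hx]
  rfl

lemma replicate_prefix_of_le {c : Bool} {m a : ℕ} (h : m ≤ a) :
    replicate m c <+: replicate a c :=
  ⟨replicate (a - m) c, by rw [← replicate_add]; congr 1; omega⟩

lemma Rset_decomp {k : ℕ} (hk : 2 ≤ k) {ℓ : ℕ} (hℓ : 1 ≤ ℓ) :
    Rset k ℓ = ⋃ a ∈ (Finset.Icc 1 (min (k-1) (ℓ-1)) : Finset ℕ),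
      (fun v => replicate a false ++ v) '' Tset k (ℓ - a) := by
  ext w
  simp only [Set.mem_iUnion, Set.mem_image, Finset.mem_Icc, Finset.mem_coe, exists_prop]
  constructor
  · rintro ⟨hlen, hhead, hlast, hav0, hav1⟩
    obtain ⟨a, v, ha, rfl, hv⟩ := exists_run false w hhead
    have hvne : v ≠ [] := by
      rintro rfl
      rw [append_nil, getLast?_replicate, if_neg (by omega)] at hlast
      simp at hlast
    have hvhead : v.head? = some true := by
      cases hv2 : v.head? with
      | none => exact absurd (head?_eq_none_iff.1 hv2) hvne
      | some b =>
        cases b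
        · exact absurd hv2 hv
        · rfl
    have hak : a < k := by
      by_contra hka
      push_neg at hka
      exact hav0 (((replicate_prefix_of_le hka).trans (prefix_append _ _)).isInfix)
    have hvlen : 0 < v.length := length_pos_iff.2 hvne
    have hlen' : a + v.length = ℓ := by simpa using hlen
    refine ⟨a, ⟨ha, by omega⟩, v, ⟨by omega, hvhead, ?_, ?_, ?_⟩, rfl⟩
    · rw [getLast?_of_append_ne_nil _ hvne] at hlast
      exact hlast
    · exact fun hin => hav0 (hin.trans (suffix_append _ _).isInfix)
    · exact fun hin => hav1 (hin.trans (suffix_append _ _).isInfix)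
  · rintro ⟨a, ⟨ha1, ha2⟩, v, ⟨hvlen, hvhead, hvlast, hv0, hv1⟩, rfl⟩
    have hak : a < k := by omega
    have hvne : v ≠ [] := ne_nil_of_head? hvhead
    refine ⟨?_, ?_, ?_, ?_, ?_⟩
    · simp only [length_append, length_replicate, hvlen]; omega
    · rw [head?_append_of_ne_nil _ (ne_nil_of_head? (head?_replicate_pos (by omega) false)),
        head?_replicate_pos (by omega)]
    · rw [getLast?_of_append_ne_nil _ hvne]; exact hvlast
    · exact avoids_run_append hak (by simpa using hvhead) hv0
    · have := avoids_other_append (c := false) (a := a) (k := k) (by omega)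
        (by rw [Bool.not_false]; exact hv1)
      rwa [Bool.not_false] at this

lemma Tset_decomp {k : ℕ} (hk : 2 ≤ k) {ℓ : ℕ} (hℓ : 1 ≤ ℓ) :
    Tset k ℓ = (if ℓ ≤ k - 1 then {replicate ℓ true} else (∅ : Set (List Bool))) ∪
      ⋃ b ∈ (Finset.Icc 1 (min (k-1) (ℓ-1)) : Finset ℕ),
        (fun v => replicate b true ++ v) '' Rset k (ℓ - b) := by
  ext w
  simp only [Set.mem_union, Set.mem_iUnion, Set.mem_image, Finset.mem_Icc,
    Finset.mem_coe, exists_prop]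
  constructor
  · rintro ⟨hlen, hhead, hlast, hav0, hav1⟩
    obtain ⟨a, v, ha, rfl, hv⟩ := exists_run true w hhead
    have hak : a < k := by
      by_contra hka
      push_neg at hka
      exact hav1 (((replicate_prefix_of_le hka).trans (prefix_append _ _)).isInfix)
    by_cases hvne : v = []
    · subst hvne
      left
      have haℓ : a = ℓ := by simpa using hlen
      subst haℓ
      rw [if_pos (by omega)]
      simp
    · right
      have hvhead : v.head? = some false := by
        cases hv2 : v.head? with
        | none => exact absurd (head?_eq_none_iff.1 hv2) hvne
        | some b =>
          cases b
          · rfl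
          · exact absurd hv2 hv
      have hvlen : 0 < v.length := length_pos_iff.2 hvne
      have hlen' : a + v.length = ℓ := by simpa using hlen
      refine ⟨a, ⟨ha, by omega⟩, v, ⟨by omega, hvhead, ?_, ?_, ?_⟩, rfl⟩
      · rw [getLast?_of_append_ne_nil _ hvne] at hlast
        exact hlast
      · exact fun hin => hav0 (hin.trans (suffix_append _ _).isInfix)
      · exact fun hin => hav1 (hin.trans (suffix_append _ _).isInfix)
  · rintro (hmem | ⟨b, ⟨hb1, hb2⟩, v, ⟨hvlen, hvhead, hvlast, hv0, hv1⟩, rfl⟩)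
    · by_cases hcase : ℓ ≤ k - 1
      · rw [if_pos hcase] at hmem
        rcases hmem with rfl
        refine ⟨by simp, head?_replicate_pos (by omega) true,
          by rw [getLast?_replicate, if_neg (by omega)], ?_, ?_⟩
        · intro hin
          have : false ∈ replicate ℓ true := hin.subset (mem_replicate.2 ⟨by omega, rfl⟩)
          simpa using eq_of_mem_replicate this
        · intro hin
          have := hin.length_le
          simp at this
          omega
      · rw [if_neg hcase] at hmem
        exact absurd hmem (Set.notMem_empty _)
    · have hbk : b < k := by omega
      have hvne : v ≠ [] := ne_nil_of_head? hvhead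
      refine ⟨?_, ?_, ?_, ?_, ?_⟩
      · simp only [length_append, length_replicate, hvlen]; omega
      · rw [head?_append_of_ne_nil _ (ne_nil_of_head? (head?_replicate_pos (by omega) true)),
          head?_replicate_pos (by omega)]
      · rw [getLast?_of_append_ne_nil _ hvne]; exact hvlast
      · have := avoids_other_append (c := true) (a := b) (k := k) (by omega)
          (by rw [Bool.not_true]; exact hv0)
        rwa [Bool.not_true] at this
      · exact avoids_run_append hbk (by simpa using hvhead) hv1


lemma Rset_finite (k ℓ : ℕ) : (Rset k ℓ).Finite :=
  (List.finite_length_eq Bool ℓ).subset fun _ hw => hw.1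

lemma Tset_finite (k ℓ : ℕ) : (Tset k ℓ).Finite :=
  (List.finite_length_eq Bool ℓ).subset fun _ hw => hw.1

lemma ncard_biUnion_of_disjoint {α β : Type*} [DecidableEq β] (s : Finset β)
    (F : β → Set α) (hfin : ∀ b ∈ s, (F b).Finite)
    (hdis : ∀ b ∈ s, ∀ c ∈ s, b ≠ c → Disjoint (F b) (F c)) :
    (⋃ b ∈ s, F b).ncard = ∑ b ∈ s, (F b).ncard := by
  induction s using Finset.induction_on with
  | empty => simp
  | @insert a s ha ih =>
    have hfin' : ∀ b ∈ s, (F b).Finite := fun b hb => hfin b (Finset.mem_insert_of_mem hb)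
    have hdis' : ∀ b ∈ s, ∀ c ∈ s, b ≠ c → Disjoint (F b) (F c) :=
      fun b hb c hc => hdis b (Finset.mem_insert_of_mem hb) c (Finset.mem_insert_of_mem hc)
    have hUeq : (⋃ b ∈ (insert a s : Finset β), F b) = F a ∪ ⋃ b ∈ s, F b := by
      simp [Set.biUnion_insert]
    rw [hUeq, Finset.sum_insert ha, ← ih hfin' hdis']
    apply Set.ncard_union_eq
    · simp only [Set.disjoint_iUnion_right]
      intro b hb
      exact hdis a (Finset.mem_insert_self a s) b (Finset.mem_insert_of_mem hb)
        (by rintro rfl; exact ha hb)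
    · exact hfin a (Finset.mem_insert_self a s)
    · exact Set.Finite.biUnion s.finite_toSet hfin' 

lemma Rset_card {k : ℕ} (hk : 2 ≤ k) {ℓ : ℕ} (hℓ : 1 ≤ ℓ) :
    (Rset k ℓ).ncard = ∑ a ∈ Finset.Icc 1 (min (k-1) (ℓ-1)), (Tset k (ℓ - a)).ncard := by
  rw [Rset_decomp hk hℓ, ncard_biUnion_of_disjoint]
  · exact Finset.sum_congr rfl fun a _ =>
      Set.ncard_image_of_injective _ fun x y h => append_cancel_left h
  · exact fun b _ => (Tset_finite k (ℓ - b)).image _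
  · intro a _ a' _ hne
    rw [Set.disjoint_left]
    rintro x ⟨v, hv, rfl⟩ ⟨v', hv', heq⟩
    exact hne (run_append_inj (by rw [hv'.2.1]; simp) (by rw [hv.2.1]; simp) heq).symm

lemma Tset_card {k : ℕ} (hk : 2 ≤ k) {ℓ : ℕ} (hℓ : 1 ≤ ℓ) :
    (Tset k ℓ).ncard = (if ℓ ≤ k - 1 then 1 else 0) +
      ∑ b ∈ Finset.Icc 1 (min (k-1) (ℓ-1)), (Rset k (ℓ - b)).ncard := by
  have hU : (⋃ b ∈ (Finset.Icc 1 (min (k-1) (ℓ-1)) : Finset ℕ),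
      (fun v => replicate b true ++ v) '' Rset k (ℓ - b)).ncard
      = ∑ b ∈ Finset.Icc 1 (min (k-1) (ℓ-1)), (Rset k (ℓ - b)).ncard := by
    rw [ncard_biUnion_of_disjoint]
    · exact Finset.sum_congr rfl fun a _ =>
        Set.ncard_image_of_injective _ fun x y h => append_cancel_left h
    · exact fun b _ => (Rset_finite k (ℓ - b)).image _
    · intro a _ a' _ hne
      rw [Set.disjoint_left]
      rintro x ⟨v, hv, rfl⟩ ⟨v', hv', heq⟩
      exact hne (run_append_inj (by rw [hv'.2.1]; simp) (by rw [hv.2.1]; simp) heq).symm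
  have hUfin : (⋃ b ∈ (Finset.Icc 1 (min (k-1) (ℓ-1)) : Finset ℕ),
      (fun v => replicate b true ++ v) '' Rset k (ℓ - b)).Finite :=
    Set.Finite.biUnion (Finset.Icc 1 (min (k-1) (ℓ-1))).finite_toSet
      (fun b _ => (Rset_finite k (ℓ - b)).image _)
  have hdisj : Disjoint (if ℓ ≤ k - 1 then {replicate ℓ true} else (∅ : Set (List Bool)))
      (⋃ b ∈ (Finset.Icc 1 (min (k-1) (ℓ-1)) : Finset ℕ),
        (fun v => replicate b true ++ v) '' Rset k (ℓ - b)) := by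
    rw [Set.disjoint_left]
    intro x hx hx'
    simp only [Set.mem_iUnion, Set.mem_image, Finset.mem_coe, Finset.mem_Icc,
      exists_prop] at hx'
    obtain ⟨b, _, v, hv, rfl⟩ := hx'
    split_ifs at hx with hcase
    · rw [Set.mem_singleton_iff] at hx
      have hfmem : false ∈ replicate b true ++ v :=
        mem_append_right _ (mem_of_mem_head? (by rw [hv.2.1]; rfl))
      rw [hx] at hfmem
      simpa using eq_of_mem_replicate hfmem
    · exact hx
  have hfin1 : (if ℓ ≤ k - 1 then {replicate ℓ true} else (∅ : Set (List Bool))).Finite := by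
    split_ifs <;> simp
  rw [Tset_decomp hk hℓ, Set.ncard_union_eq hdisj hfin1 hUfin, hU]
  congr 1
  split_ifs <;> simp


/-- The correction term `d_ℓ^{(k)}`. -/
def Dk (k n : ℕ) : ℤ := if n % k = 0 then 1 else if n % k = 1 then -1 else 0

lemma Dk_period (k n : ℕ) : Dk k (n + k) = Dk k n := by
  unfold Dk
  rw [Nat.add_mod_right]

lemma Dk_sum0 {k : ℕ} (hk : 2 ≤ k) : ∑ j ∈ Finset.range k, Dk k j = 0 := by
  have hcong : ∀ j ∈ Finset.range k, Dk k j
      = (if j = 0 then (1 : ℤ) else 0) + (if j = 1 then (-1 : ℤ) else 0) := by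
    intro j hj
    rw [Finset.mem_range] at hj
    unfold Dk
    rw [Nat.mod_eq_of_lt hj]
    split_ifs <;> omega
  rw [Finset.sum_congr rfl hcong, Finset.sum_add_distrib]
  rw [Finset.sum_ite_eq' (Finset.range k) 0 (fun _ => (1 : ℤ)),
    Finset.sum_ite_eq' (Finset.range k) 1 (fun _ => (-1 : ℤ))]
  rw [if_pos (Finset.mem_range.2 (by omega)), if_pos (Finset.mem_range.2 (by omega))]
  ring

lemma Dk_window {k : ℕ} (hk : 2 ≤ k) : ∀ n, ∑ j ∈ Finset.range k, Dk k (n + j) = 0 := by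
  intro n
  induction n with
  | zero => simpa using Dk_sum0 hk
  | succ n ih =>
    have h1 : ∑ j ∈ Finset.range (k + 1), Dk k (n + j)
        = ∑ j ∈ Finset.range k, Dk k (n + j) + Dk k (n + k) :=
      Finset.sum_range_succ _ k
    have h2 : ∑ j ∈ Finset.range (k + 1), Dk k (n + j)
        = (∑ j ∈ Finset.range k, Dk k (n + (j + 1))) + Dk k (n + 0) :=
      Finset.sum_range_succ' _ k
    have h3 : ∑ j ∈ Finset.range k, Dk k (n + 1 + j)
        = ∑ j ∈ Finset.range k, Dk k (n + (j + 1)) := by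
      apply Finset.sum_congr rfl
      intro j _
      congr 1
      omega
    have h4 := Dk_period k n
    simp only [Nat.add_zero] at h2
    rw [h3]
    linarith

lemma pow2_sum (n : ℕ) : ∑ j ∈ Finset.range n, (2 : ℤ)^j = 2^n - 1 := by
  induction n with
  | zero => simp
  | succ n ih => rw [Finset.sum_range_succ, ih]; ring

theorem stmt_5' (k : ℕ) (hk : 2 ≤ k)
    (f : ℕ → ℕ)
    (hf1 : ∀ j : ℕ, j < k - 1 → f j = 2 ^ j)
    (hf2 : ∀ j : ℕ, k - 1 ≤ j → f j = ∑ i ∈ Finset.range (k - 1), f (j - 1 - i)) :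
    ∀ ℓ : ℕ, 1 ≤ ℓ →
      2 * ((Rset k ℓ).ncard : ℤ) = (f (ℓ - 1) : ℤ) + Dk k ℓ ∧
      2 * ((Tset k ℓ).ncard : ℤ) = (f (ℓ - 1) : ℤ) - Dk k ℓ := by
  intro ℓ
  induction ℓ using Nat.strong_induction_on with
  | _ ℓ ih =>
    intro hℓ
    set m := min (k - 1) (ℓ - 1) with hm
    have hr := Rset_card hk hℓ
    have ht := Tset_card hk hℓ
    have hsum2R : ∑ a ∈ Finset.Icc 1 m, 2 * ((Rset k (ℓ - a)).ncard : ℤ)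
        = ∑ a ∈ Finset.Icc 1 m, ((f (ℓ - a - 1) : ℤ) + Dk k (ℓ - a)) := by
      apply Finset.sum_congr rfl
      intro a ha
      rw [Finset.mem_Icc] at ha
      exact (ih (ℓ - a) (by omega) (by omega)).1
    have hsum2T : ∑ a ∈ Finset.Icc 1 m, 2 * ((Tset k (ℓ - a)).ncard : ℤ)
        = ∑ a ∈ Finset.Icc 1 m, ((f (ℓ - a - 1) : ℤ) - Dk k (ℓ - a)) := by
      apply Finset.sum_congr rfl
      intro a ha
      rw [Finset.mem_Icc] at ha
      exact (ih (ℓ - a) (by omega) (by omega)).2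
    have hrz : 2 * ((Rset k ℓ).ncard : ℤ)
        = ∑ a ∈ Finset.Icc 1 m, ((f (ℓ - a - 1) : ℤ))
          - ∑ a ∈ Finset.Icc 1 m, Dk k (ℓ - a) := by
      rw [hr]
      push_cast
      rw [Finset.mul_sum, hsum2T, Finset.sum_sub_distrib]
    have htz : 2 * ((Tset k ℓ).ncard : ℤ)
        = 2 * (if ℓ ≤ k - 1 then (1 : ℤ) else 0) +
          (∑ a ∈ Finset.Icc 1 m, ((f (ℓ - a - 1) : ℤ))
            + ∑ a ∈ Finset.Icc 1 m, Dk k (ℓ - a)) := by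
      rw [ht]
      push_cast
      rw [mul_add, Finset.mul_sum, hsum2R, Finset.sum_add_distrib]
    rcases le_or_gt k ℓ with hkl | hkl
    · -- case ℓ ≥ k
      have hmk : m = k - 1 := by omega
      have hSf : ∑ a ∈ Finset.Icc 1 m, ((f (ℓ - a - 1) : ℤ)) = (f (ℓ - 1) : ℤ) := by
        rw [hmk, hf2 (ℓ - 1) (by omega)]
        push_cast
        refine Finset.sum_nbij' (fun a => a - 1) (fun i => i + 1) ?_ ?_ ?_ ?_ ?_
        · intro a ha
          simp only [Finset.mem_Icc] at ha
          simp only [Finset.mem_range]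
          omega
        · intro i hi
          simp only [Finset.mem_range] at hi
          simp only [Finset.mem_Icc]
          omega
        · intro a ha
          simp only [Finset.mem_Icc] at ha
          show a - 1 + 1 = a
          omega
        · intro i hi
          show i + 1 - 1 = i
          omega
        · intro a ha
          simp only [Finset.mem_Icc] at ha
          show (f (ℓ - a - 1) : ℤ) = (f (ℓ - 1 - 1 - (a - 1)) : ℤ)
          rw [show ℓ - 1 - 1 - (a - 1) = ℓ - a - 1 by omega]
      have hSd : ∑ a ∈ Finset.Icc 1 m, Dk k (ℓ - a) = - Dk k ℓ := by
        have hwin := Dk_window hk (ℓ + 1 - k)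
        rw [show Finset.range k = Finset.range ((k - 1) + 1) by congr 1; omega,
          Finset.sum_range_succ, show ℓ + 1 - k + (k - 1) = ℓ by omega] at hwin
        have hre : ∑ a ∈ Finset.Icc 1 m, Dk k (ℓ - a)
            = ∑ j ∈ Finset.range (k - 1), Dk k (ℓ + 1 - k + j) := by
          rw [hmk]
          refine Finset.sum_nbij' (fun a => k - 1 - a) (fun j => k - 1 - j) ?_ ?_ ?_ ?_ ?_
          · intro a ha
            simp only [Finset.mem_Icc] at ha
            simp only [Finset.mem_range]
            omega
          · intro j hj
            simp only [Finset.mem_range] at hj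
            simp only [Finset.mem_Icc]
            omega
          · intro a ha
            simp only [Finset.mem_Icc] at ha
            show k - 1 - (k - 1 - a) = a
            omega
          · intro j hj
            simp only [Finset.mem_range] at hj
            show k - 1 - (k - 1 - j) = j
            omega
          · intro a ha
            simp only [Finset.mem_Icc] at ha
            show Dk k (ℓ - a) = Dk k (ℓ + 1 - k + (k - 1 - a))
            rw [show ℓ + 1 - k + (k - 1 - a) = ℓ - a by omega]
        rw [hre]
        linarith
      have hind : (if ℓ ≤ k - 1 then (1 : ℤ) else 0) = 0 := if_neg (by omega)
      constructor
      · rw [hrz, hSf, hSd]; ring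
      · rw [htz, hSf, hSd, hind]; ring
    · -- case ℓ < k
      have hmℓ : m = ℓ - 1 := by omega
      have hSf : ∑ a ∈ Finset.Icc 1 m, ((f (ℓ - a - 1) : ℤ)) = 2 ^ (ℓ - 1) - 1 := by
        rw [hmℓ, ← pow2_sum (ℓ - 1)]
        refine Finset.sum_nbij' (fun a => ℓ - 1 - a) (fun j => ℓ - 1 - j) ?_ ?_ ?_ ?_ ?_
        · intro a ha
          simp only [Finset.mem_Icc] at ha
          simp only [Finset.mem_range]
          omega
        · intro j hj
          simp only [Finset.mem_range] at hj
          simp only [Finset.mem_Icc]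
          omega
        · intro a ha
          simp only [Finset.mem_Icc] at ha
          show ℓ - 1 - (ℓ - 1 - a) = a
          omega
        · intro j hj
          simp only [Finset.mem_range] at hj
          show ℓ - 1 - (ℓ - 1 - j) = j
          omega
        · intro a ha
          simp only [Finset.mem_Icc] at ha
          show (f (ℓ - a - 1) : ℤ) = 2 ^ (ℓ - 1 - a)
          rw [show ℓ - a - 1 = ℓ - 1 - a by omega, hf1 (ℓ - 1 - a) (by omega)]
          push_cast
          rfl
      have hfl : (f (ℓ - 1) : ℤ) = 2 ^ (ℓ - 1) := by
        rw [hf1 (ℓ - 1) (by omega)]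
        push_cast
        rfl
      have hSd : ∑ a ∈ Finset.Icc 1 m, Dk k (ℓ - a) = if ℓ = 1 then 0 else -1 := by
        rw [hmℓ]
        rcases eq_or_lt_of_le hℓ with h1 | h1
        · rw [if_pos h1.symm, ← h1]
          simp
        · rw [if_neg (by omega)]
          rw [Finset.sum_eq_single_of_mem (ℓ - 1) (Finset.mem_Icc.2 (by omega))]
          · unfold Dk
            rw [show ℓ - (ℓ - 1) = 1 by omega, Nat.mod_eq_of_lt (by omega),
              if_neg (by omega), if_pos rfl]
          · intro b hb hbne
            rw [Finset.mem_Icc] at hb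
            unfold Dk
            rw [Nat.mod_eq_of_lt (by omega), if_neg (by omega), if_neg (by omega)]
      have hDℓ : Dk k ℓ = if ℓ = 1 then -1 else 0 := by
        unfold Dk
        rw [Nat.mod_eq_of_lt hkl, if_neg (by omega)]
      have hind : (if ℓ ≤ k - 1 then (1 : ℤ) else 0) = 1 := if_pos (by omega)
      constructor
      · rw [hrz, hSf, hSd, hfl, hDℓ]
        split_ifs <;> ring
      · rw [htz, hSf, hSd, hfl, hDℓ, hind]
        split_ifs <;> ring


/-- For `ℓ ≥ 1`, `r_ℓ^{(k)} = (f_{ℓ-1}^{(k-1)} + d_ℓ^{(k)}) / 2`, where `f^{(k-1)}`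
is the `(k-1)`-generalized Fibonacci sequence. -/
theorem stmt_5 (k ℓ : ℕ) (hk : 2 ≤ k) (hℓ : 1 ≤ ℓ)
    (f : ℕ → ℕ)
    (hf1 : ∀ j : ℕ, j < k - 1 → f j = 2 ^ j)
    (hf2 : ∀ j : ℕ, k - 1 ≤ j → f j = ∑ i ∈ Finset.range (k - 1), f (j - 1 - i)) :
    (2 : ℤ) * (Rset k ℓ).ncard =
      (f (ℓ - 1) : ℤ) +
        (if ℓ % k = 0 then 1 else if ℓ % k = 1 then -1 else 0) := by
  exact (stmt_5' k hk f hf1 hf2 ℓ hℓ).1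
end

section
/- Any two matrices in 𝒱_{m,n}^{(k)} with different numbers of columns, or whose column positions are shifted, cannot overlap horizontally or diagonally: more precisely, if C has rows from V^{s,(k)} and D has rows from V^{t,(k)}, any placement of D over C in which some row of D is aligned so that a proper nonempty prefix of a row of D coincides with a proper nonempty suffix of a row of C (or vice versa) yields a mismatch in some entry. -/
open List

/-- A variable-dimension binary matrix is modeled as a list of rows.  `entryZ M i j` is
the entry of `M` in row `i`, column `j` (as integers), when it exists. -/
def entryZ (M : List (List Bool)) (i j : ℤ) : Option Bool :=
  if 0 ≤ i ∧ 0 ≤ j then (M[i.toNat]?).bind (fun r => r[j.toNat]?) else none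

/-- The translate of `B` by `(a, b)` agrees with `A` on all common entries. -/
def AgreeAt (A B : List (List Bool)) (a b : ℤ) : Prop :=
  ∀ i j : ℤ, ∀ x y : Bool,
    entryZ A i j = some x → entryZ B (i - a) (j - b) = some y → x = y

/-- The supports of `A` and of the translate of `B` by `(a, b)` intersect. -/
def MeetsAt (A B : List (List Bool)) (a b : ℤ) : Prop :=
  ∃ i j : ℤ, ∃ x y : Bool,
    entryZ A i j = some x ∧ entryZ B (i - a) (j - b) = some y

/-- `A` and `B` overlap: some translate of `B` over `A` (not the trivial
coincidence of a matrix with itself) has nonempty intersection with `A` and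
agrees with `A` on all common entries. -/
def MOverlap (A B : List (List Bool)) : Prop :=
  ∃ a b : ℤ, ¬(a = 0 ∧ b = 0 ∧ A = B) ∧ MeetsAt A B a b ∧ AgreeAt A B a b

/-- The matrices `M_{h,s}^{(k)}` with `h` rows taken from `V^{s,(k)}`, first row
`T`, last row `B`, and inner rows different from `T` and `B`. -/
def MatSet (k h s : ℕ) (T B : List Bool) : Set (List (List Bool)) :=
  {M | M.length = h ∧ M.head? = some T ∧ M.getLast? = some B ∧
       (∀ r ∈ M, r ∈ Vik k s) ∧
       (∀ i : ℕ, ∀ r : List Bool, 0 < i → i + 1 < h → M[i]? = some r →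
          r ≠ T ∧ r ≠ B)}

lemma vik_spec {k i : ℕ} (hk : 1 ≤ k) {w : List Bool} (hw : w ∈ Vik k i) :
    w.length = i ∧
    (∀ j, j < k → w[j]? = some true) ∧
    (∀ j, i - k ≤ j → j < i → w[j]? = some false) ∧
    (∀ p, 1 ≤ p → p + k ≤ i → ∃ q, q < k ∧ w[p+q]? = some false) := by
  obtain ⟨u, hwe, hlen, -, havT⟩ := hw
  set m : List Bool := [false] ++ u ++ [true] with hm
  have hmlen : m.length = u.length + 2 := by simp [hm]
  have hilen : i = k + m.length + k := by
    rw [← hlen, hwe]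
    simp only [length_append, length_replicate]
  have hfirst : ∀ j, j < k → w[j]? = some true := by
    intro j hj
    rw [hwe]
    simp only [getElem?_append, length_append, length_replicate, getElem?_replicate]
    all_goals split_ifs <;> first | rfl | omega
  have hmid : ∀ j, j < m.length → w[k + j]? = m[j]? := by
    intro j hj
    rw [hwe]
    simp only [getElem?_append, length_append, length_replicate]
    rw [if_pos (by omega), if_neg (by omega)]
    congr 1
    omega
  have hlast : ∀ j, i - k ≤ j → j < i → w[j]? = some false := by
    intro j h1 h2
    rw [hwe]
    simp only [getElem?_append, length_append, length_replicate]
    rw [if_neg (by omega), getElem?_replicate, if_pos (by omega)]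
  refine ⟨hlen, hfirst, hlast, ?_⟩
  intro p hp1 hpk
  by_cases hpk' : p ≤ k
  · refine ⟨k - p, by omega, ?_⟩
    have he : p + (k - p) = k + 0 := by omega
    rw [he, hmid 0 (by omega)]
    simp [hm]
  · push_neg at hpk'
    by_cases hpm : p + k ≤ k + m.length
    · by_contra hcon
      push_neg at hcon
      apply havT
      have hwin : ∀ q, q < k → w[p + q]? = some true := by
        intro q hq
        have h2 : p + q < w.length := by omega
        have hne := hcon q hq
        have h2' : w[p + q]? = some w[p + q] := getElem?_eq_getElem h2
        cases hb : w[p + q] with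
        | false => exact absurd (by rw [h2', hb]) hne
        | true => rw [h2', hb]
      set a := p - k with ha
      have hseg : (m.drop a).take k = replicate k true := by
        rw [eq_replicate_iff]
        constructor
        · rw [length_take, length_drop]; omega
        · intro b hb
          rw [mem_iff_getElem?] at hb
          obtain ⟨n, hn⟩ := hb
          rw [getElem?_take] at hn
          by_cases hnk : n < k
          · rw [if_pos hnk, getElem?_drop] at hn
            have hmw := hmid (a + n) (by omega)
            rw [show k + (a + n) = p + n by omega, hwin n hnk] at hmw
            rw [← hmw] at hn
            exact (Option.some_inj.mp hn).symm
          · rw [if_neg hnk] at hn; exact absurd hn (by simp)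
      refine ⟨m.take a, m.drop (a + k), ?_⟩
      rw [← hseg]
      have hd : m.drop (a + k) = (m.drop a).drop k := by
        rw [drop_drop, Nat.add_comm]
      rw [hd, append_assoc, take_append_drop, take_append_drop]
    · refine ⟨k + m.length - p, by omega, ?_⟩
      have he : p + (k + m.length - p) = k + m.length := by omega
      rw [he]
      exact hlast _ (by omega) (by omega)

lemma vik_mismatch {k s t : ℕ} (hk : 3 ≤ k) (hs : 2 * k + 2 ≤ s) (ht : 2 * k + 2 ≤ t)
    {r r' : List Bool} (hr : r ∈ Vik k s) (hr' : r' ∈ Vik k t)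
    {β : ℕ} (hβ1 : 1 ≤ β) (hβs : β < s) :
    ∃ q x y, r[β + q]? = some x ∧ r'[q]? = some y ∧ x ≠ y := by
  obtain ⟨-, hf, hl, hwin⟩ := vik_spec (by omega) hr
  obtain ⟨-, hf', -, -⟩ := vik_spec (by omega) hr'
  by_cases h : β + k ≤ s
  · obtain ⟨q, hq, hfalse⟩ := hwin β hβ1 h
    exact ⟨q, false, true, hfalse, hf' q (by omega), by simp⟩
  · refine ⟨0, false, true, ?_, hf' 0 (by omega), by simp⟩
    rw [Nat.add_zero]
    exact hl β (by omega) hβs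

/-- Matrices with rows from `V^{s,(k)}` resp. `V^{t,(k)}` cannot overlap
horizontally or diagonally: any placement with nonzero horizontal shift whose
supports intersect yields a mismatch in some entry. -/
theorem stmt_6 (k s t : ℕ) (hk : 3 ≤ k) (hs : 2 * k + 2 ≤ s) (ht : 2 * k + 2 ≤ t)
    (C D : List (List Bool))
    (hC : ∀ r ∈ C, r ∈ Vik k s) (hD : ∀ r ∈ D, r ∈ Vik k t)
    (a b : ℤ) (hb : b ≠ 0) (hmeet : MeetsAt C D a b) :
    ¬ AgreeAt C D a b := by
  intro hagree
  obtain ⟨i, j, x, y, hx, hy⟩ := hmeet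
  unfold entryZ at hx hy
  have hi : 0 ≤ i ∧ 0 ≤ j := by
    by_contra h
    rw [if_neg h] at hx; cases hx
  have hi' : 0 ≤ i - a ∧ 0 ≤ j - b := by
    by_contra h
    rw [if_neg h] at hy; cases hy
  rw [if_pos hi] at hx
  rw [if_pos hi'] at hy
  obtain ⟨r, hrC, hrj⟩ := Option.bind_eq_some_iff.mp hx
  obtain ⟨r', hrD, hrj'⟩ := Option.bind_eq_some_iff.mp hy
  have hrV : r ∈ Vik k s := hC r (List.mem_iff_getElem?.mpr ⟨_, hrC⟩)
  have hrV' : r' ∈ Vik k t := hD r' (List.mem_iff_getElem?.mpr ⟨_, hrD⟩)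
  have hrlen : r.length = s := (vik_spec (by omega) hrV).1
  have hrlen' : r'.length = t := (vik_spec (by omega) hrV').1
  have hjs : j.toNat < s := by
    rw [← hrlen]; exact (List.getElem?_eq_some_iff.mp hrj).1
  have hjt : (j - b).toNat < t := by
    rw [← hrlen']; exact (List.getElem?_eq_some_iff.mp hrj').1
  rcases lt_trichotomy b 0 with hbneg | hb0 | hbpos
  · -- b < 0 : swap roles
    set c : ℕ := (-b).toNat with hc
    have hc1 : 1 ≤ c := by omega
    have hct : c < t := by omega
    obtain ⟨q, x', y', hq1, hq2, hxy⟩ :=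
      vik_mismatch (t := s) hk ht hs hrV' hrV hc1 hct
    have hqs : q < s := by
      rw [← hrlen]; exact (List.getElem?_eq_some_iff.mp hq2).1
    have h1 : entryZ C i (q : ℤ) = some y' := by
      unfold entryZ
      rw [if_pos ⟨hi.1, by positivity⟩, hrC]
      simpa using hq2
    have h2 : entryZ D (i - a) ((q : ℤ) - b) = some x' := by
      unfold entryZ
      rw [if_pos ⟨hi'.1, by omega⟩, hrD]
      have : ((q : ℤ) - b).toNat = c + q := by omega
      simpa [this] using hq1
    exact hxy ((hagree i (q : ℤ) y' x' h1 h2).symm)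
  · exact hb hb0
  · -- b > 0
    set β : ℕ := b.toNat with hβ
    have hβ1 : 1 ≤ β := by omega
    have hβs : β < s := by omega
    obtain ⟨q, x', y', hq1, hq2, hxy⟩ :=
      vik_mismatch (t := t) hk hs ht hrV hrV' hβ1 hβs
    have h1 : entryZ C i (b + (q : ℤ)) = some x' := by
      unfold entryZ
      rw [if_pos ⟨hi.1, by omega⟩, hrC]
      have : (b + (q : ℤ)).toNat = β + q := by omega
      simpa [this] using hq1
    have h2 : entryZ D (i - a) (b + (q : ℤ) - b) = some y' := by
      unfold entryZ
      rw [if_pos ⟨hi'.1, by omega⟩, hrD]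
      have : (b + (q : ℤ) - b).toNat = q := by omega
      simpa [this] using hq2
    exact hxy (hagree i (b + (q : ℤ)) x' y' h1 h2)
end

section
/- The set 𝒱_{m,n}^{(k)} of binary matrices with between 2 and m rows and between 2k+3 and n columns, where every matrix with s columns has first row T^{s,(k)}, last row B^{s,(k)}, and all inner rows in V^{s,(k)} \ {T^{s,(k)}, B^{s,(k)}}, is a non-overlapping set of matrices: no translate of one matrix of the set (other than the identity placement of a matrix onto itself) agrees with another matrix of the set on all common entries. -/
open List

lemma vik_parts {k s : ℕ} {w : List Bool} (hw : w ∈ Vik k s) :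
    ∃ X : List Bool,
      w = List.replicate k true ++ (X ++ List.replicate k false) ∧
      s = 2 * k + X.length ∧ 2 ≤ X.length ∧
      Avoids (List.replicate k false) X ∧ Avoids (List.replicate k true) X ∧
      X[0]? = some false ∧ X[X.length - 1]? = some true := by
  obtain ⟨u, hw, hlen, h0, h1⟩ := hw
  refine ⟨[false] ++ u ++ [true], ?_, ?_, by simp, h0, h1, by simp, ?_⟩
  · rw [hw]; simp [List.append_assoc]
  · rw [← hlen, hw]; simp; omega
  · have hX : ([false] ++ u ++ [true] : List Bool) = (false :: u) ++ [true] := by simp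
    rw [hX]
    have h2 : ((false :: u) ++ [true]).length - 1 = (false :: u).length := by simp
    rw [h2, List.getElem?_concat_length]

lemma vik_len {k s : ℕ} {w : List Bool} (hw : w ∈ Vik k s) : w.length = s := by
  obtain ⟨u, rfl, hlen, -, -⟩ := hw
  exact hlen

lemma vik_s_big {k s : ℕ} {w : List Bool} (hw : w ∈ Vik k s) : 2 * k + 2 ≤ s := by
  obtain ⟨X, -, hs, hX, -⟩ := vik_parts hw
  omega

lemma vik_get_lo {k s : ℕ} {w : List Bool} (hw : w ∈ Vik k s) {i : ℕ} (hi : i < k) :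
    w[i]? = some true := by
  obtain ⟨X, rfl, -, -, -, -, -, -⟩ := vik_parts hw
  rw [List.getElem?_append]
  simp [hi, List.getElem?_replicate]

lemma vik_get_hi {k s : ℕ} {w : List Bool} (hw : w ∈ Vik k s) {i : ℕ}
    (h1 : s - k ≤ i) (h2 : i < s) : w[i]? = some false := by
  obtain ⟨X, rfl, hs, hX2, -, -, -, -⟩ := vik_parts hw
  rw [List.getElem?_append_right (by simp only [List.length_replicate]; omega),
      List.getElem?_append_right (by simp only [List.length_replicate]; omega),
      List.getElem?_replicate,
      if_pos (by simp only [List.length_replicate]; omega)]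

lemma vik_get_mid {k : ℕ} {w X : List Bool}
    (hparts : w = List.replicate k true ++ (X ++ List.replicate k false))
    {t : ℕ} (ht : t < X.length) : w[k + t]? = X[t]? := by
  subst hparts
  rw [List.getElem?_append_right (by simp)]
  simp only [List.length_replicate, Nat.add_sub_cancel_left]
  rw [List.getElem?_append]
  rw [if_pos ht]

lemma vik_get_k {k s : ℕ} {w : List Bool} (hw : w ∈ Vik k s) : w[k]? = some false := by
  obtain ⟨X, hp, -, hX2, -, -, hX0, -⟩ := vik_parts hw
  have := vik_get_mid hp (t := 0) (by omega)
  simpa using this.trans hX0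

lemma vik_get_last_one {k s : ℕ} {w : List Bool} (hw : w ∈ Vik k s) :
    w[s - k - 1]? = some true := by
  obtain ⟨X, hp, hs, hX2, -, -, -, hXl⟩ := vik_parts hw
  have h1 : s - k - 1 = k + (X.length - 1) := by omega
  rw [h1, vik_get_mid hp (by omega), hXl]

lemma replicate_infix_of_window {X : List Bool} {c : Bool} {d k : ℕ}
    (hd : d + k ≤ X.length) (h : ∀ j < k, X[d + j]? = some c) :
    List.replicate k c <:+: X := by
  have hrep : (X.drop d).take k = List.replicate k c := by
    rw [List.eq_replicate_iff]
    constructor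
    · rw [List.length_take, List.length_drop]; omega
    · intro b hb
      obtain ⟨j, hj, hbe⟩ := List.mem_iff_getElem.mp hb
      have hjk : j < k := by
        rw [List.length_take, List.length_drop] at hj; omega
      have h2 : ((X.drop d).take k)[j]? = some b := by
        rw [List.getElem?_eq_some_iff]; exact ⟨hj, hbe⟩
      rw [List.getElem?_take, if_pos hjk, List.getElem?_drop] at h2
      have h3 := h j hjk
      rw [h2] at h3
      simpa using h3
  rw [← hrep]
  exact (List.take_prefix k _).isInfix.trans (List.drop_suffix d X).isInfix

lemma vik_no_one_inside {k s : ℕ} {w : List Bool} (hw : w ∈ Vik k s) (hk : 0 < k)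
    {p : ℕ} (hp : 1 ≤ p) (hall : ∀ j < k, w[p + j]? = some true) : False := by
  have hlen : w.length = s := vik_len hw
  have hlt : p + (k - 1) < s := by
    obtain ⟨hlt, -⟩ := List.getElem?_eq_some_iff.mp (hall (k - 1) (by omega))
    omega
  by_cases hpk : p ≤ k
  · have h1 := hall (k - p) (by omega)
    rw [show p + (k - p) = k by omega, vik_get_k hw] at h1
    simp at h1
  · by_cases hhi : s - k ≤ p + (k - 1)
    · have h1 := hall (k - 1) (by omega)
      rw [vik_get_hi hw hhi (by omega)] at h1
      simp at h1
    · obtain ⟨X, hparts, hs, hX2, -, hav1, -, -⟩ := vik_parts hw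
      apply hav1
      apply replicate_infix_of_window (d := p - k) (by omega)
      intro j hj
      have h1 := hall j hj
      rw [show p + j = k + (p - k + j) by omega, vik_get_mid hparts (by omega)] at h1
      exact h1

lemma vik_zero_pos {k s : ℕ} {w : List Bool} (hw : w ∈ Vik k s) (hk : 0 < k)
    {p : ℕ} (hall : ∀ j < k, w[p + j]? = some false) : p = s - k := by
  have hlen : w.length = s := vik_len hw
  have hlt : p + (k - 1) < s := by
    obtain ⟨hlt, -⟩ := List.getElem?_eq_some_iff.mp (hall (k - 1) (by omega))
    omega
  by_contra hne
  have hpk : k ≤ p := by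
    by_contra hpk
    have h1 := hall 0 (by omega)
    rw [Nat.add_zero, vik_get_lo hw (by omega)] at h1
    simp at h1
  have hsbig := vik_s_big hw
  -- p + k ≤ s and p ≠ s - k, so p + k < s
  have hpks : p + k < s := by omega
  by_cases hcase : s - 2 * k ≤ p
  · have h1 := hall (s - k - 1 - p) (by omega)
    rw [show p + (s - k - 1 - p) = s - k - 1 by omega, vik_get_last_one hw] at h1
    simp at h1
  · obtain ⟨X, hparts, hs, hX2, hav0, -, -, -⟩ := vik_parts hw
    apply hav0
    apply replicate_infix_of_window (d := p - k) (by omega)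
    intro j hj
    have h1 := hall j hj
    rw [show p + j = k + (p - k + j) by omega, vik_get_mid hparts (by omega)] at h1
    exact h1

lemma overlap_shift {k s s' : ℕ} {u v : List Bool} (hk : 0 < k)
    (hu : u ∈ Vik k s) (hv : v ∈ Vik k s') {b : ℕ} (hb : 1 ≤ b) (hbs : b < s)
    (hag : ∀ (q : ℕ) (x y : Bool), u[q + b]? = some x → v[q]? = some y → x = y) :
    False := by
  have hsu : u.length = s := vik_len hu
  have hks' := vik_s_big hv
  by_cases hcase : b + k ≤ s
  · apply vik_no_one_inside hu hk hb
    intro j hj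
    have hvj : v[j]? = some true := vik_get_lo hv hj
    have hx : u[j + b]? = some u[j + b] :=
      List.getElem?_eq_getElem (by omega)
    have := hag j _ true hx hvj
    rw [show b + j = j + b by omega, hx, this]
  · have h1 : u[(s - 1 - b) + b]? = some false := by
      rw [show (s - 1 - b) + b = s - 1 by omega]
      exact vik_get_hi hu (by omega) (by omega)
    have h2 : v[s - 1 - b]? = some true := vik_get_lo hv (by omega)
    have := hag _ _ _ h1 h2
    simp at this

lemma overlap_len {k s s' : ℕ} {u v : List Bool} (hk : 0 < k)
    (hu : u ∈ Vik k s) (hv : v ∈ Vik k s') (hss : s ≤ s')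
    (hag : ∀ (q : ℕ) (x y : Bool), u[q]? = some x → v[q]? = some y → x = y) :
    s = s' := by
  have hsv : v.length = s' := vik_len hv
  have hks := vik_s_big hu
  have hks' := vik_s_big hv
  have hz : s - k = s' - k := by
    apply vik_zero_pos hv hk
    intro j hj
    have h1 : u[s - k + j]? = some false := vik_get_hi hu (by omega) (by omega)
    have hy : v[s - k + j]? = some v[s - k + j] :=
      List.getElem?_eq_getElem (by omega)
    rw [hy, ← hag _ _ _ h1 hy]
  omega

lemma entryZ_some_elim {M : List (List Bool)} {i j : ℤ} {x : Bool}
    (h : entryZ M i j = some x) :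
    ∃ (p q : ℕ) (r : List Bool), i = p ∧ j = q ∧ M[p]? = some r ∧ r[q]? = some x := by
  unfold entryZ at h
  split_ifs at h with h0
  · obtain ⟨h0i, h0j⟩ := h0
    obtain ⟨r, hr, hx⟩ := Option.bind_eq_some_iff.mp h
    exact ⟨i.toNat, j.toNat, r, (Int.toNat_of_nonneg h0i).symm,
      (Int.toNat_of_nonneg h0j).symm, hr, hx⟩

lemma entryZ_nat (M : List (List Bool)) (p q : ℕ) :
    entryZ M (p : ℤ) (q : ℤ) = (M[p]?).bind (fun r => r[q]?) := by
  unfold entryZ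
  rw [if_pos ⟨Int.natCast_nonneg p, Int.natCast_nonneg q⟩, Int.toNat_natCast,
    Int.toNat_natCast]

lemma mem_of_getElem?' {α : Type*} {l : List α} {n : ℕ} {a : α}
    (h : l[n]? = some a) : a ∈ l := by
  obtain ⟨hlt, rfl⟩ := List.getElem?_eq_some_iff.mp h
  exact List.getElem_mem hlt

/-- The set `𝒱_{m,n}^{(k)}` of matrices with between `2` and `m` rows and between
`2k+3` and `n` columns, with fixed first row `T s` and last row `B s` for each
column count `s`, is a non-overlapping set of matrices. -/
theorem stmt_7 (k m n : ℕ) (hk : 3 ≤ k) (hm : 2 ≤ m) (hn : 2 * k + 3 ≤ n)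
    (T B : ℕ → List Bool)
    (hTB : ∀ s : ℕ, 2 * k + 3 ≤ s → s ≤ n →
      T s ∈ Vik k s ∧ B s ∈ Vik k s ∧ T s ≠ B s)
    (A A' : List (List Bool))
    (hA : ∃ h s : ℕ, 2 ≤ h ∧ h ≤ m ∧ 2 * k + 3 ≤ s ∧ s ≤ n ∧
      A ∈ MatSet k h s (T s) (B s))
    (hA' : ∃ h s : ℕ, 2 ≤ h ∧ h ≤ m ∧ 2 * k + 3 ≤ s ∧ s ≤ n ∧
      A' ∈ MatSet k h s (T s) (B s)) :
    ¬ MOverlap A A' := by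
  have hk0 : 0 < k := by omega
  obtain ⟨h, s, hh2, hhm, hs1, hs2, hMlen, hMhead, hMlast, hMrows, hMinner⟩ := hA
  obtain ⟨h', s', hh2', hhm', hs1', hs2', hMlen', hMhead', hMlast', hMrows', hMinner'⟩ := hA'
  rintro ⟨a, b, hne, ⟨i0, j0, x0, y0, hx0, hy0⟩, hagree⟩
  obtain ⟨iA, jA, rA0, hiA, hjA, hrA0, hxA0⟩ := entryZ_some_elim hx0
  obtain ⟨iB, jB, rB0, hiB, hjB, hrB0, hyB0⟩ := entryZ_some_elim hy0
  have ha : a = (iA : ℤ) - iB := by omega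
  have hb : b = (jA : ℤ) - jB := by omega
  -- row memberships and lengths
  have hu : rA0 ∈ Vik k s := hMrows rA0 (mem_of_getElem?' hrA0)
  have hv : rB0 ∈ Vik k s' := hMrows' rB0 (mem_of_getElem?' hrB0)
  -- pointwise agreement in natural coordinates
  have hagN : ∀ (p p' q q' : ℕ), (p : ℤ) - a = p' → (q : ℤ) - b = q' →
      ∀ (r r' : List Bool) (x y : Bool), A[p]? = some r → r[q]? = some x →
      A'[p']? = some r' → r'[q']? = some y → x = y := by
    intro p p' q q' hp hq r r' x y h1 h2 h3 h4
    apply hagree p q x y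
    · rw [entryZ_nat, h1]; simpa using h2
    · rw [hp, hq, entryZ_nat, h3]; simpa using h4
  have hcolag : ∀ (q q' : ℕ), (q : ℤ) - b = q' → ∀ x y : Bool,
      rA0[q]? = some x → rB0[q']? = some y → x = y :=
    fun q q' hq x y h2 h4 =>
      hagN iA iB q q' (by omega) hq rA0 rB0 x y hrA0 h2 hrB0 h4
  have hjAs : jA < s := by
    have := (List.getElem?_eq_some_iff.mp hxA0).1
    have := vik_len hu; omega
  have hjBs : jB < s' := by
    have := (List.getElem?_eq_some_iff.mp hyB0).1
    have := vik_len hv; omega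
  -- Step 1: b = 0 and s = s'
  have hb0 : b = 0 ∧ s = s' := by
    rcases Nat.lt_trichotomy jA jB with hlt | heq | hgt
    · exfalso
      apply overlap_shift hk0 hv hu (b := jB - jA) (by omega) (by omega)
      intro q x y h1 h2
      exact (hcolag q (q + (jB - jA)) (by omega) y x h2 h1).symm
    · have hbz : b = 0 := by omega
      constructor
      · exact hbz
      rcases Nat.le_total s s' with hss | hss
      · exact overlap_len hk0 hu hv hss
          (fun q x y h1 h2 => hcolag q q (by omega) x y h1 h2)
      · exact (overlap_len hk0 hv hu hss
          (fun q x y h1 h2 => (hcolag q q (by omega) y x h2 h1).symm)).symm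
    · exfalso
      apply overlap_shift hk0 hu hv (b := jA - jB) (by omega) (by omega)
      intro q x y h1 h2
      exact hcolag (q + (jA - jB)) q (by omega) x y h1 h2
  obtain ⟨hbz, hseq⟩ := hb0
  subst hseq
  -- Step 2: rows at matching positions are equal
  have hroweq : ∀ (p p' : ℕ), (p : ℤ) - a = p' → ∀ r r' : List Bool,
      A[p]? = some r → A'[p']? = some r' → r = r' := by
    intro p p' hp r r' h1 h3
    have hlA : r.length = s := vik_len (hMrows r (mem_of_getElem?' h1))
    have hlB : r'.length = s := vik_len (hMrows' r' (mem_of_getElem?' h3))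
    apply List.ext_getElem?
    intro q
    by_cases hq : q < s
    · have h2 : r[q]? = some r[q] := List.getElem?_eq_getElem (by omega)
      have h4 : r'[q]? = some r'[q] := List.getElem?_eq_getElem (by omega)
      rw [h2, h4,
        hagN p p' q q hp (by omega) r r' _ _ h1 h2 h3 h4]
    · rw [List.getElem?_eq_none (by omega), List.getElem?_eq_none (by omega)]
  have hTne : T s ≠ B s := (hTB s hs1 hs2).2.2
  have hA0 : A[0]? = some (T s) := by
    rw [← List.head?_eq_getElem?]; exact hMhead
  have hA'0 : A'[0]? = some (T s) := by
    rw [← List.head?_eq_getElem?]; exact hMhead'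
  have hAlast : A[h - 1]? = some (B s) := by
    have h1 := hMlast
    rw [List.getLast?_eq_getElem?, hMlen] at h1
    exact h1
  have hA'last : A'[h' - 1]? = some (B s) := by
    have h1 := hMlast'
    rw [List.getLast?_eq_getElem?, hMlen'] at h1
    exact h1
  have hiAh : iA < h := by
    have := (List.getElem?_eq_some_iff.mp hrA0).1; omega
  have hiBh : iB < h' := by
    have := (List.getElem?_eq_some_iff.mp hrB0).1; omega
  -- Step 3: vertical analysis
  rcases Nat.lt_trichotomy iA iB with hlt | heq | hgt
  · -- a < 0 : row (iB - iA) of A' equals row 0 of A, which is T s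
    set an := iB - iA with han
    have hanh : an < h' := by omega
    have hr' : A'[an]? = some A'[an] := List.getElem?_eq_getElem (by omega)
    have heqr : T s = A'[an] := hroweq 0 an (by omega) _ _ hA0 hr'
    by_cases hin : an + 1 < h'
    · exact (hMinner' an _ (by omega) hin hr').1 heqr.symm
    · have hidx : an = h' - 1 := by omega
      have h2 : A'[an]? = some (B s) := by rw [hidx]; exact hA'last
      rw [hr'] at h2
      exact hTne (heqr.trans (Option.some.inj h2))
  · -- a = 0
    have haz : a = 0 := by omega
    rcases Nat.lt_trichotomy h h' with hlth | heqh | hgth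
    · have hr' : A'[h - 1]? = some A'[h - 1] := List.getElem?_eq_getElem (by omega)
      have heqr : B s = A'[h - 1] := hroweq (h - 1) (h - 1) (by omega) _ _ hAlast hr'
      exact (hMinner' (h - 1) _ (by omega) (by omega) hr').2 heqr.symm
    · -- h = h' : A = A'
      apply hne
      refine ⟨haz, hbz, ?_⟩
      apply List.ext_getElem?
      intro p
      by_cases hp : p < h
      · have h1 : A[p]? = some A[p] := List.getElem?_eq_getElem (by omega)
        have h3 : A'[p]? = some A'[p] := List.getElem?_eq_getElem (by omega)
        rw [h1, h3, hroweq p p (by omega) _ _ h1 h3]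
      · rw [List.getElem?_eq_none (by omega), List.getElem?_eq_none (by omega)]
    · have hr : A[h' - 1]? = some A[h' - 1] := List.getElem?_eq_getElem (by omega)
      have heqr : A[h' - 1] = B s := hroweq (h' - 1) (h' - 1) (by omega) _ _ hr hA'last
      exact (hMinner (h' - 1) _ (by omega) (by omega) hr).2 heqr
  · -- a > 0 : row (iA - iB) of A equals row 0 of A', which is T s
    set an := iA - iB with han
    have hanh : an < h := by omega
    have hr : A[an]? = some A[an] := List.getElem?_eq_getElem (by omega)
    have heqr : A[an] = T s := hroweq an 0 (by omega) _ _ hr hA'0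
    by_cases hin : an + 1 < h
    · exact (hMinner an _ (by omega) hin hr).1 heqr
    · have hidx : an = h - 1 := by omega
      have h2 : A[an]? = some (B s) := by rw [hidx]; exact hAlast
      rw [hr] at h2
      exact hTne (heqr.symm.trans (Option.some.inj h2))
end

section
/- Fix k ≥ 3 and s ≥ 2k+3. Any two matrices C and D, each with s columns, whose first rows both equal a fixed T^{s,(k)} ∈ V^{s,(k)}, whose last rows both equal a fixed B^{s,(k)} ∈ V^{s,(k)} with B^{s,(k)} ≠ T^{s,(k)}, and whose inner rows lie in V^{s,(k)} \ {T^{s,(k)}, B^{s,(k)}}, cannot overlap vertically: for any nonzero vertical shift placing D over C, some entry of D differs from the corresponding entry of C. -/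
open List

lemma VikLen {k s : ℕ} {w : List Bool} (h : w ∈ Vik k s) : w.length = s := by
  obtain ⟨u, -, hl, -, -⟩ := h; exact hl

lemma entryZ_bounds {M : List (List Bool)} {i j : ℤ} {x : Bool}
    (h : entryZ M i j = some x) : 0 ≤ i ∧ 0 ≤ j ∧ i.toNat < M.length := by
  unfold entryZ at h
  split at h
  · next hc =>
    obtain ⟨r, hr, -⟩ := Option.bind_eq_some_iff.1 h
    exact ⟨hc.1, hc.2, (List.getElem?_eq_some_iff.1 hr).1⟩
  · exact absurd h (by simp)

lemma agree_rows (C D : List (List Bool)) (a : ℤ) (h : AgreeAt C D a 0)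
    (i i' : ℕ) (hii : (i : ℤ) - a = (i' : ℤ))
    (r r' : List Bool) (hr : C[i]? = some r) (hr' : D[i']? = some r')
    (hl : r.length = r'.length) : r = r' := by
  apply List.ext_getElem hl
  intro j hj hj'
  apply h i j
  · simp [entryZ, hr, List.getElem?_eq_getElem hj]
  · have h1 : (0 : ℤ) ≤ (i : ℤ) - a := by omega
    have h2 : ((i : ℤ) - a).toNat = i' := by omega
    simp only [entryZ, sub_zero, h1, Int.ofNat_nonneg, and_self, if_true, h2,
      Int.toNat_natCast, hr', Option.bind_some]
    simp [List.getElem?_eq_getElem hj']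

/-- Two matrices with `s` columns, fixed common first row `T` and last row `B`
(`T ≠ B`, both in `V^{s,(k)}`), and inner rows in `V^{s,(k)} \ {T, B}`, cannot
overlap vertically: any nonzero vertical shift whose supports intersect yields a
mismatch. -/
theorem stmt_9 (k s : ℕ) (hk : 3 ≤ k) (hs : 2 * k + 3 ≤ s)
    (T B : List Bool) (hT : T ∈ Vik k s) (hB : B ∈ Vik k s) (hTB : T ≠ B)
    (C D : List (List Bool)) (h₁ h₂ : ℕ) (hh₁ : 2 ≤ h₁) (hh₂ : 2 ≤ h₂)
    (hC : C ∈ MatSet k h₁ s T B) (hD : D ∈ MatSet k h₂ s T B)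
    (a : ℤ) (ha : a ≠ 0) (hmeet : MeetsAt C D a 0) :
    ¬ AgreeAt C D a 0 := by
  intro hagree
  obtain ⟨lenC, headC, lastC, memC, innerC⟩ := hC
  obtain ⟨lenD, headD, lastD, memD, innerD⟩ := hD
  obtain ⟨i, j, x, y, hx, hy⟩ := hmeet
  obtain ⟨hi0, hj0, hiC⟩ := entryZ_bounds hx
  obtain ⟨hia0, -, hiD⟩ := entryZ_bounds hy
  rw [lenC] at hiC
  rw [lenD] at hiD
  have hC0 : C[0]? = some T := by rwa [← List.head?_eq_getElem?]
  have hD0 : D[0]? = some T := by rwa [← List.head?_eq_getElem?]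
  have hClast : C[h₁ - 1]? = some B := by
    rw [List.getLast?_eq_getElem?, lenC] at lastC; exact lastC
  have hDlast : D[h₂ - 1]? = some B := by
    rw [List.getLast?_eq_getElem?, lenD] at lastD; exact lastD
  have hTlen : T.length = s := VikLen hT
  rcases lt_or_gt_of_ne ha with hneg | hpos
  · -- a < 0 : row 0 of C (= T) coincides with row (-a) of D
    set m : ℕ := (-a).toNat with hm
    have hmlt : m < h₂ := by omega
    have hmD : m < D.length := by omega
    set r' : List Bool := D[m] with hr'def
    have hr' : D[m]? = some r' := List.getElem?_eq_getElem hmD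
    have hr'len : r'.length = s :=
      VikLen (memD r' (List.mem_of_getElem? hr'))
    have heq : T = r' := by
      refine agree_rows C D a hagree 0 m (by omega) T r' hC0 hr' (by omega)
    have hm0 : 0 < m := by omega
    rcases eq_or_lt_of_le (Nat.succ_le_of_lt hmlt) with hlast | hinner
    · have : m = h₂ - 1 := by omega
      rw [this] at hr'
      rw [hDlast] at hr'
      exact hTB (by rw [heq, Option.some_inj.1 hr'])
    · exact (innerD m r' hm0 hinner hr').1 heq.symm
  · -- a > 0 : row a of C coincides with row 0 of D (= T)
    set m : ℕ := a.toNat with hm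
    have hmlt : m < h₁ := by omega
    have hmC : m < C.length := by omega
    set r : List Bool := C[m] with hrdef
    have hr : C[m]? = some r := List.getElem?_eq_getElem hmC
    have hrlen : r.length = s :=
      VikLen (memC r (List.mem_of_getElem? hr))
    have heq : r = T := by
      refine agree_rows C D a hagree m 0 (by omega) r T hr hD0 (by omega)
    have hm0 : 0 < m := by omega
    rcases eq_or_lt_of_le (Nat.succ_le_of_lt hmlt) with hlast | hinner
    · have : m = h₁ - 1 := by omega
      rw [this] at hr
      rw [hClast] at hr
      exact hTB (by rw [← heq, Option.some_inj.1 hr])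
    · exact (innerC m r hm0 hinner hr).1 heq
end

section
/- The cardinality of 𝒱_{m,n}^{(k)} equals Σ_{h=2}^{m} Σ_{s=3}^{n−2k} (r_s^{(k)} − 2)^{h−2}, where r_s^{(k)} is the number of binary strings of length s starting with 0, ending with 1, and avoiding both 0^k and 1^k as factors. -/
open List

namespace Stmt11Aux

/-- set of lists of length n with entries in s. -/
def ListsIn {α : Type*} (s : Set α) (n : ℕ) : Set (List α) :=
  {l | l.length = n ∧ ∀ x ∈ l, x ∈ s}

lemma ListsIn_succ {α : Type*} (s : Set α) (n : ℕ) :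
    ListsIn s (n + 1) = (fun p : α × List α => p.1 :: p.2) '' (s ×ˢ ListsIn s n) := by
  ext l
  constructor
  · rintro ⟨hl, hmem⟩
    cases l with
    | nil => simp at hl
    | cons a u =>
      refine ⟨(a, u), ⟨hmem a (by simp), by simpa using hl, fun x hx => hmem x (by simp [hx])⟩, rfl⟩
  · rintro ⟨⟨a, u⟩, ⟨ha, hu, hmem⟩, rfl⟩
    refine ⟨by simp [hu], ?_⟩
    intro x hx
    rcases List.mem_cons.mp hx with rfl | hx
    · exact ha
    · exact hmem x hx

lemma ListsIn_finite {α : Type*} {s : Set α} (hs : s.Finite) (n : ℕ) :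
    (ListsIn s n).Finite := by
  induction n with
  | zero =>
    apply Set.Finite.subset (Set.finite_singleton ([] : List α))
    intro l hl; simp [ListsIn, List.length_eq_zero_iff] at hl; simp [hl.1]
  | succ n ih =>
    rw [ListsIn_succ]
    exact (hs.prod ih).image _

lemma cons_inj {α : Type*} : Function.Injective (fun p : α × List α => p.1 :: p.2) := by
  rintro ⟨a, u⟩ ⟨b, v⟩ h
  simp only [List.cons.injEq] at h
  simp [h.1, h.2]

lemma ncard_sprod {α β : Type*} (s : Set α) (t : Set β) :
    (s ×ˢ t).ncard = s.ncard * t.ncard := by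
  rw [← Nat.card_coe_set_eq, ← Nat.card_coe_set_eq, ← Nat.card_coe_set_eq,
    ← Nat.card_prod]
  exact Nat.card_congr (Equiv.Set.prod s t)

lemma ListsIn_ncard {α : Type*} {s : Set α} (n : ℕ) :
    (ListsIn s n).ncard = s.ncard ^ n := by
  induction n with
  | zero =>
    have : ListsIn s 0 = {([] : List α)} := by
      ext l; simp [ListsIn, List.length_eq_zero_iff]
      rintro rfl; simp
    simp [this]
  | succ n ih =>
    rw [ListsIn_succ, Set.ncard_image_of_injective _ cons_inj, ncard_sprod, ih, pow_succ]
    ring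

lemma ncard_biUnion {α ι : Type*} (A : Finset ι) (f : ι → Set α)
    (hfin : ∀ i ∈ A, (f i).Finite)
    (hdisj : ∀ i ∈ A, ∀ j ∈ A, i ≠ j → Disjoint (f i) (f j)) :
    (⋃ i ∈ A, f i).ncard = ∑ i ∈ A, (f i).ncard := by
  classical
  induction A using Finset.induction with
  | empty => simp
  | @insert a A ha ih =>
    rw [Finset.set_biUnion_insert, Finset.sum_insert ha,
      Set.ncard_union_eq ?_ (hfin a (by simp)) ?_, ih (fun i hi => hfin i (by simp [hi]))
        (fun i hi j hj => hdisj i (by simp [hi]) j (by simp [hj]))]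
    · rw [Set.disjoint_iUnion₂_right]
      intro i hi
      have hi' : i ∈ A := hi
      exact hdisj a (by simp) i (by simp [hi']) (by rintro rfl; exact ha hi')
    · exact Set.Finite.biUnion A.finite_toSet (fun i hi => hfin i (by simp [Finset.mem_coe.mp hi]))

lemma mid_decomp {r : List Bool} (h1 : r.head? = some false) (h2 : r.getLast? = some true) :
    ∃ u : List Bool, r = [false] ++ u ++ [true] := by
  cases r with
  | nil => simp at h1
  | cons a r' =>
    simp at h1
    subst h1
    cases r' using List.reverseRecOn with
    | nil => simp at h2
    | append_singleton u b =>
      rw [show false :: (u ++ [b]) = (false :: u) ++ [b] by simp,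
        List.getLast?_concat] at h2
      simp at h2
      subst h2
      exact ⟨u, by simp⟩

lemma Vik_eq_image (k s : ℕ) (hs : 2 * k ≤ s) :
    Vik k s = (fun r => List.replicate k true ++ r ++ List.replicate k false) ''
      Rset k (s - 2 * k) := by
  ext w
  constructor
  · rintro ⟨u, rfl, hlen, hav0, hav1⟩
    refine ⟨[false] ++ u ++ [true], ⟨?_, by simp, ?_, hav0, hav1⟩, rfl⟩
    · simp at hlen ⊢; omega
    · rw [show [false] ++ u ++ [true] = ([false] ++ u) ++ [true] by simp,
        List.getLast?_concat]
  · rintro ⟨r, ⟨hlen, hh, hl, hav0, hav1⟩, rfl⟩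
    obtain ⟨u, rfl⟩ := mid_decomp hh hl
    exact ⟨u, rfl, by simp at hlen ⊢; omega, hav0, hav1⟩

lemma Vik_len {k s : ℕ} {w : List Bool} (h : w ∈ Vik k s) : w.length = s := h.choose_spec.2.1

lemma repl_inj (k : ℕ) :
    Function.Injective (fun r : List Bool =>
      List.replicate k true ++ r ++ List.replicate k false) := by
  intro a b h
  simp only [← List.append_assoc] at h
  have h2 := List.append_left_injective (List.replicate k false) h
  exact List.append_right_injective (List.replicate k true) h2

lemma Vik_ncard (k s : ℕ) (hs : 2 * k ≤ s) :
    (Vik k s).ncard = (Rset k (s - 2 * k)).ncard := by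
  rw [Vik_eq_image k s hs, Set.ncard_image_of_injective _ (repl_inj k)]

lemma Rset_finite (k ℓ : ℕ) : (Rset k ℓ).Finite :=
  Set.Finite.subset (List.finite_length_eq Bool ℓ) (fun _ hw => hw.1)

lemma Vik_finite (k s : ℕ) : (Vik k s).Finite := by
  rcases le_or_gt (2 * k) s with h | h
  · rw [Vik_eq_image k s h]; exact (Rset_finite _ _).image _
  · apply Set.Finite.subset (Set.finite_singleton [])
    rintro w ⟨u, rfl, hlen, -⟩
    simp at hlen; omega

lemma MatSet_eq_image (k h s : ℕ) (T B : List Bool) (hh : 2 ≤ h)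
    (hT : T ∈ Vik k s) (hB : B ∈ Vik k s) :
    MatSet k h s T B = (fun L => T :: (L ++ [B])) '' ListsIn (Vik k s \ {T, B}) (h - 2) := by
  ext M
  constructor
  · rintro ⟨hlen, hhead, hlast, hall, hinner⟩
    obtain ⟨M₁, rfl⟩ : ∃ M₁, M = T :: M₁ := by
      cases M with
      | nil => simp at hhead
      | cons r M₁ => simp at hhead; exact ⟨M₁, by rw [hhead]⟩
    cases M₁ using List.reverseRecOn with
      | nil => simp at hlen; omega
      | append_singleton L b =>
        rw [show T :: (L ++ [b]) = (T :: L) ++ [b] by simp, List.getLast?_concat] at hlast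
        simp only [Option.some.injEq] at hlast
        replace hlast : B = b := hlast.symm
        subst hlast
        refine ⟨L, ⟨by simp at hlen ⊢; omega, ?_⟩, rfl⟩
        intro r hr
        obtain ⟨i, hi, rfl⟩ := List.mem_iff_getElem.mp hr
        have hM : (T :: (L ++ [B]))[i+1]? = some L[i] := by
          rw [List.getElem?_cons_succ, List.getElem?_append_left hi, List.getElem?_eq_getElem hi]
        have := hinner (i+1) L[i] (by omega) (by simp at hlen; omega) hM
        exact ⟨hall _ (List.mem_cons_of_mem _ (List.mem_append_left _ (List.getElem_mem hi))),
          by simp [this.1, this.2]⟩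
  · rintro ⟨L, ⟨hLlen, hLmem⟩, rfl⟩
    refine ⟨by simp; omega, by simp, ?_, ?_, ?_⟩
    · show (T :: (L ++ [B])).getLast? = some B
      rw [show T :: (L ++ [B]) = (T :: L) ++ [B] by simp, List.getLast?_concat]
    · intro r hr
      rcases List.mem_cons.mp hr with rfl | hr
      · exact hT
      · rcases List.mem_append.mp hr with hr | hr
        · exact (hLmem r hr).1
        · simp at hr; subst hr; exact hB
    · rintro i r hi hih hMi
      obtain ⟨j, rfl⟩ : ∃ j, i = j + 1 := ⟨i - 1, by omega⟩
      rw [List.getElem?_cons_succ] at hMi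
      have hj : j < L.length := by omega
      rw [List.getElem?_append_left hj, List.getElem?_eq_getElem hj] at hMi
      simp only [Option.some.injEq] at hMi
      subst hMi
      have := (hLmem _ (List.getElem_mem hj)).2
      simp at this
      exact ⟨this.1, this.2⟩

lemma matmap_inj (T B : List Bool) :
    Function.Injective (fun L : List (List Bool) => T :: (L ++ [B])) := by
  intro a b h
  simp only [List.cons.injEq, true_and] at h
  exact List.append_left_injective [B] h

lemma MatSet_hs {k h s h' s' : ℕ} {T B T' B' : List Bool} {M : List (List Bool)}
    (h1 : M ∈ MatSet k h s T B) (h2 : M ∈ MatSet k h' s' T' B') : h = h' ∧ s = s' := by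
  obtain ⟨hlen, hhead, -, hall, -⟩ := h1
  obtain ⟨hlen', -, -, hall', -⟩ := h2
  refine ⟨by omega, ?_⟩
  cases M with
  | nil => simp at hhead
  | cons r M₁ =>
    have e1 := Vik_len (hall r (by simp))
    have e2 := Vik_len (hall' r (by simp))
    omega

end Stmt11Aux

open Stmt11Aux in
/-- `|𝒱_{m,n}^{(k)}| = Σ_{h=2}^{m} Σ_{s=3}^{n-2k} (r_s^{(k)} - 2)^(h-2)`. -/
theorem stmt_11 (k m n : ℕ) (hk : 3 ≤ k) (hm : 2 ≤ m) (hn : 2 * k + 3 ≤ n)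
    (T B : ℕ → List Bool)
    (hTB : ∀ s : ℕ, 2 * k + 3 ≤ s → s ≤ n →
      T s ∈ Vik k s ∧ B s ∈ Vik k s ∧ T s ≠ B s) :
    ({M : List (List Bool) | ∃ h s : ℕ, 2 ≤ h ∧ h ≤ m ∧ 2 * k + 3 ≤ s ∧ s ≤ n ∧
        M ∈ MatSet k h s (T s) (B s)}).ncard =
      ∑ h ∈ Finset.Icc 2 m, ∑ s ∈ Finset.Icc 3 (n - 2 * k),
        ((Rset k s).ncard - 2) ^ (h - 2) := by
  classical
  have hSet : {M : List (List Bool) | ∃ h s : ℕ, 2 ≤ h ∧ h ≤ m ∧ 2 * k + 3 ≤ s ∧ s ≤ n ∧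
        M ∈ MatSet k h s (T s) (B s)} =
      ⋃ p ∈ (Finset.Icc 2 m ×ˢ Finset.Icc (2 * k + 3) n : Finset (ℕ × ℕ)),
        MatSet k p.1 p.2 (T p.2) (B p.2) := by
    ext M
    simp only [Set.mem_setOf_eq, Set.mem_iUnion, Finset.mem_product, Finset.mem_Icc, Prod.exists,
      exists_prop]
    constructor
    · rintro ⟨h, s, h1, h2, h3, h4, h5⟩
      exact ⟨h, s, ⟨⟨h1, h2⟩, h3, h4⟩, h5⟩
    · rintro ⟨h, s, ⟨⟨h1, h2⟩, h3, h4⟩, h5⟩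
      exact ⟨h, s, h1, h2, h3, h4, h5⟩
  have hfin : ∀ p ∈ (Finset.Icc 2 m ×ˢ Finset.Icc (2 * k + 3) n : Finset (ℕ × ℕ)),
      (MatSet k p.1 p.2 (T p.2) (B p.2)).Finite := by
    rintro ⟨h, s⟩ hp
    rw [Finset.mem_product, Finset.mem_Icc, Finset.mem_Icc] at hp
    obtain ⟨hT, hB, -⟩ := hTB s hp.2.1 hp.2.2
    rw [MatSet_eq_image k h s _ _ hp.1.1 hT hB]
    exact (ListsIn_finite ((Vik_finite k s).diff) _).image _
  rw [hSet, ncard_biUnion _ _ hfin ?_]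
  · rw [Finset.sum_product]
    refine Finset.sum_congr rfl fun h hh => ?_
    rw [Finset.mem_Icc] at hh
    have key : ∀ s ∈ Finset.Icc (2 * k + 3) n,
        (MatSet k h s (T s) (B s)).ncard = ((Rset k (s - 2 * k)).ncard - 2) ^ (h - 2) := by
      intro s hs
      rw [Finset.mem_Icc] at hs
      obtain ⟨hT, hB, hne⟩ := hTB s hs.1 hs.2
      rw [MatSet_eq_image k h s _ _ hh.1 hT hB,
        Set.ncard_image_of_injective _ (matmap_inj _ _), ListsIn_ncard,
        Set.ncard_diff (by rw [Set.insert_subset_iff]; exact ⟨hT, by simpa using hB⟩)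
          ((Set.finite_singleton _).insert _),
        Set.ncard_pair hne, Vik_ncard k s (by omega)]
    rw [Finset.sum_congr rfl key]
    refine Finset.sum_nbij' (fun s => s - 2 * k) (fun s => s + 2 * k) ?_ ?_ ?_ ?_
      (fun a _ => rfl)
    · intro a ha; rw [Finset.mem_Icc] at ha
      show a - 2 * k ∈ Finset.Icc 3 (n - 2 * k); rw [Finset.mem_Icc]; omega
    · intro a ha; rw [Finset.mem_Icc] at ha
      show a + 2 * k ∈ Finset.Icc (2 * k + 3) n; rw [Finset.mem_Icc]; omega
    · intro a ha; rw [Finset.mem_Icc] at ha; omega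
    · intro a ha; rw [Finset.mem_Icc] at ha; omega
  · rintro ⟨h, s⟩ hp ⟨h', s'⟩ hq hne
    rw [Set.disjoint_left]
    intro M hM hM'
    obtain ⟨rfl, rfl⟩ := MatSet_hs hM hM'
    exact hne rfl
end

section
/- For every ℓ with 2k ≤ ℓ ≤ n, the string w = 1^{⌈ℓ/2⌉} 0^{⌊ℓ/2⌋} is bifix-free, w ∉ 𝒱_n^{(k)}, and 𝒱_n^{(k)} ∪ {w} is still a non-overlapping set of strings; hence 𝒱_n^{(k)} is not non-expandable. -/
open List

section Helpers

lemma repl_prefix {l : List Bool} {n : ℕ} {a : Bool} (h : l <+: replicate n a) :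
    l = replicate l.length a := by
  obtain ⟨m, hm, rfl⟩ := sublist_replicate_iff.mp h.sublist
  simp

lemma repl_suffix {l : List Bool} {n : ℕ} {a : Bool} (h : l <:+ replicate n a) :
    l = replicate l.length a := by
  obtain ⟨m, hm, rfl⟩ := sublist_replicate_iff.mp h.sublist
  simp

lemma gE_eq {l l' : List Bool} (h : l = l') {i : ℕ} {hi : i < l.length} :
    l[i]'hi = l'[i]'(h ▸ hi) := by subst h; rfl

lemma gE_congr {l : List Bool} {i j : ℕ} (h : i = j) {hi : i < l.length} :
    l[i]'hi = l[j]'(h ▸ hi) := by subst h; rfl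

lemma suffix_getElem {x y : List Bool} (h : x <:+ y) {i : ℕ} (hi : i < x.length) :
    x[i] = y[y.length - x.length + i]'(by have := h.length_le; omega) := by
  obtain ⟨t, rfl⟩ := h
  rw [getElem_append_right (by simp)]
  congr 1
  simp

lemma suffix_getElem' {x y : List Bool} (h : x <:+ y) {i j : ℕ} (hi : i < x.length)
    (hj : j = y.length - x.length + i) (hjl : j < y.length) : x[i]'hi = y[j]'hjl := by
  subst hj; exact suffix_getElem h hi

lemma wpre {a b : ℕ} {p : List Bool} (h : p <+: replicate a true ++ replicate b false) :
    p = replicate p.length true ∨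
      (a ≤ p.length ∧ p = replicate a true ++ replicate (p.length - a) false) := by
  rcases le_or_gt p.length a with hle | hlt
  · left
    exact repl_prefix (prefix_of_prefix_length_le h (prefix_append _ _) (by simpa))
  · right
    have h2 : replicate a true <+: p :=
      prefix_of_prefix_length_le (prefix_append _ _) h (by simp; omega)
    obtain ⟨r, rfl⟩ := h2
    have hr : r <+: replicate b false := by
      obtain ⟨t, ht⟩ := h
      rw [append_assoc] at ht
      exact ⟨t, append_cancel_left ht⟩
    refine ⟨by simp, ?_⟩
    have := repl_prefix hr
    simp only [length_append, length_replicate] at this ⊢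
    rw [Nat.add_sub_cancel_left, ← this]

lemma wsuf {a b : ℕ} {s : List Bool} (h : s <:+ replicate a true ++ replicate b false) :
    s = replicate s.length false ∨
      (b ≤ s.length ∧ s = replicate (s.length - b) true ++ replicate b false) := by
  rcases le_or_gt s.length b with hle | hlt
  · left
    exact repl_suffix (suffix_of_suffix_length_le h (suffix_append _ _) (by simpa))
  · right
    have h2 : replicate b false <:+ s :=
      suffix_of_suffix_length_le (suffix_append _ _) h (by simp; omega)
    obtain ⟨r, rfl⟩ := h2
    have hr : r <:+ replicate a true := by
      obtain ⟨t, ht⟩ := h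
      rw [← append_assoc] at ht
      exact ⟨t, append_cancel_right ht⟩
    refine ⟨by simp, ?_⟩
    have := repl_suffix hr
    simp only [length_append, length_replicate] at this ⊢
    rw [Nat.add_sub_cancel, ← this]

lemma no_zeros_prefix {k : ℕ} {x : List Bool} {b : ℕ} (hb : k ≤ b)
    (h : replicate b false <+: (false :: (x ++ [true])) ++ replicate k false)
    (hav : Avoids (replicate k false) (false :: (x ++ [true]))) : False := by
  set z : List Bool := false :: (x ++ [true]) with hz
  rcases le_or_gt b z.length with hle | hlt
  · have h1 : replicate b false <+: z :=
      prefix_of_prefix_length_le h (prefix_append _ _) (by simpa)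
    have h2 : replicate k false <+: replicate b false :=
      ⟨replicate (b - k) false, by rw [← replicate_add]; congr 1; omega⟩
    exact hav (h2.trans h1).isInfix
  · have h1 : z <+: replicate b false :=
      prefix_of_prefix_length_le (prefix_append _ _) h (by simp; omega)
    have h2 := repl_prefix h1
    have h3 : (true : Bool) ∈ z := by simp [hz]
    rw [h2] at h3
    simp at h3

lemma no_ones_suffix {k : ℕ} {x : List Bool} {a : ℕ} (ha : k ≤ a)
    (h : replicate a true <:+ replicate k true ++ (false :: (x ++ [true])))
    (hav : Avoids (replicate k true) (false :: (x ++ [true]))) : False := by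
  set z : List Bool := false :: (x ++ [true]) with hz
  rcases le_or_gt a z.length with hle | hlt
  · have h1 : replicate a true <:+ z :=
      suffix_of_suffix_length_le h (suffix_append _ _) (by simpa)
    have h2 : replicate k true <:+ replicate a true :=
      ⟨replicate (a - k) true, by rw [← replicate_add]; congr 1; omega⟩
    exact hav (h2.trans h1).isInfix
  · have h1 : z <:+ replicate a true :=
      suffix_of_suffix_length_le (suffix_append _ _) h (by simp; omega)
    have h2 := repl_suffix h1
    have h3 : (false : Bool) ∈ z := by simp [hz]
    rw [h2] at h3
    simp at h3

lemma case_a_core {k : ℕ} {x q : List Bool}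
    (hq : q <+: (false :: (x ++ [true])) ++ replicate k false)
    (hs : replicate k false <:+ q) (hlt : q.length < (x.length + 2) + k)
    (hav : Avoids (replicate k false) (false :: (x ++ [true]))) : False := by
  set z : List Bool := false :: (x ++ [true]) with hz
  have hzl : z.length = x.length + 2 := by simp [hz]
  rcases le_or_gt q.length z.length with hle | hlt2
  · have h1 : q <+: z := prefix_of_prefix_length_le hq (prefix_append _ _) (by simpa)
    exact hav (hs.isInfix.trans h1.isInfix)
  · have hzq : z <+: q := prefix_of_prefix_length_le (prefix_append _ _) hq (le_of_lt hlt2)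
    obtain ⟨t, ht⟩ := hs
    have htl : t.length + k = q.length := by
      have := congrArg List.length ht; simp at this; omega
    have htp : t <+: z := prefix_of_prefix_length_le ⟨replicate k false, ht⟩ hzq (by omega)
    obtain ⟨s, hs2⟩ := htp
    obtain ⟨r, hr⟩ := hzq
    have hk : replicate k false = s ++ r := by
      have : t ++ replicate k false = t ++ (s ++ r) := by
        rw [ht, ← hr, ← hs2, append_assoc]
      exact append_cancel_left this
    have hsrep : s = replicate s.length false := repl_prefix ⟨r, hk.symm⟩
    have hslen : 1 ≤ s.length := by
      have := congrArg List.length hs2; simp at this; omega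
    have hts : [true] <:+ s := by
      refine suffix_of_suffix_length_le ?_ ⟨t, hs2⟩ (by simpa)
      rw [hz, show false :: (x ++ [true]) = (false :: x) ++ [true] by simp]
      exact suffix_append _ _
    have := repl_suffix (hsrep ▸ hts)
    simp at this

/-- characters of a `Vik`-shaped word: low part. -/
lemma vg_lo {k : ℕ} {x : List Bool} {j : ℕ} (h : j < k) :
    (replicate k true ++ ((false :: (x ++ [true])) ++ replicate k false))[j]'
      (by simp; omega) = true := by
  rw [getElem_append_left (by simpa)]
  exact getElem_replicate _

lemma vg_k {k : ℕ} {x : List Bool} :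
    (replicate k true ++ ((false :: (x ++ [true])) ++ replicate k false))[k]'
      (by simp) = false := by
  rw [getElem_append_right (by simp),
    gE_congr (show k - (replicate k true).length = 0 by simp)]
  rfl

lemma vg_zlast {k : ℕ} {x : List Bool} :
    (replicate k true ++ ((false :: (x ++ [true])) ++ replicate k false))[k + (x.length + 1)]'
      (by simp) = true := by
  rw [getElem_append_right (by simp),
    gE_congr (show k + (x.length + 1) - (replicate k true).length = x.length + 1 by simp),
    getElem_append_left (by simp), getElem_cons_succ]
  exact getElem_concat_length rfl _

lemma vg_hi {k : ℕ} {x : List Bool} {j : ℕ} (h1 : k + (x.length + 2) ≤ j)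
    (h2 : j < 2 * k + (x.length + 2)) :
    (replicate k true ++ ((false :: (x ++ [true])) ++ replicate k false))[j]'
      (by simp; omega) = false := by
  rw [getElem_append_right (by simp; omega), getElem_append_right (by simp; omega)]
  exact getElem_replicate _

lemma mem_struct {k n : ℕ} {u : List Bool} (hu : u ∈ Vset k n) :
    ∃ x : List Bool,
      u = replicate k true ++ ((false :: (x ++ [true])) ++ replicate k false) ∧
      u.length = 2 * k + (x.length + 2) ∧ u.length ≤ n ∧ 2 * k + 2 ≤ u.length ∧
      Avoids (replicate k false) (false :: (x ++ [true])) ∧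
      Avoids (replicate k true) (false :: (x ++ [true])) := by
  obtain ⟨i, hi1, hi2, x, hw, hlen, hav0, hav1⟩ := hu
  have hx : [false] ++ x ++ [true] = false :: (x ++ [true]) := by simp
  refine ⟨x, ?_, ?_, by omega, by omega, by rwa [hx] at hav0, by rwa [hx] at hav1⟩
  · rw [hw, hx, append_assoc]
  · rw [hw]; simp; omega

end Helpers

/-- For `2k ≤ ℓ ≤ n`, the string `w = 1^⌈ℓ/2⌉ 0^⌊ℓ/2⌋` is bifix-free, is not in
`𝒱_n^{(k)}`, and `𝒱_n^{(k)} ∪ {w}` is still non-overlapping; hence `𝒱_n^{(k)}`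
is not non-expandable. -/
theorem stmt_13 (k n ℓ : ℕ) (hk : 3 ≤ k) (hn : 2 * k + 2 ≤ n)
    (hℓ₁ : 2 * k ≤ ℓ) (hℓ₂ : ℓ ≤ n) :
    CrossBF (List.replicate ((ℓ + 1) / 2) true ++ List.replicate (ℓ / 2) false)
        (List.replicate ((ℓ + 1) / 2) true ++ List.replicate (ℓ / 2) false) ∧
    (List.replicate ((ℓ + 1) / 2) true ++ List.replicate (ℓ / 2) false) ∉ Vset k n ∧
    (∀ u v : List Bool,
      u ∈ Vset k n ∪
        {List.replicate ((ℓ + 1) / 2) true ++ List.replicate (ℓ / 2) false} →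
      v ∈ Vset k n ∪
        {List.replicate ((ℓ + 1) / 2) true ++ List.replicate (ℓ / 2) false} →
      CrossBF u v) := by
  set a := (ℓ + 1) / 2 with hadef
  set b := ℓ / 2 with hbdef
  have hab : a + b = ℓ := by omega
  have hka : k ≤ a := by omega
  have hkb : k ≤ b := by omega
  have hk1 : 1 ≤ k := by omega
  set w : List Bool := replicate a true ++ replicate b false with hwdef
  have hwlen : w.length = ℓ := by rw [hwdef]; simp; omega
  -- (A) CrossBF w w
  have hA : CrossBF w w := by
    intro p hne hpu hpv hpair
    obtain ⟨hp, hs⟩ := hpair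
    obtain ⟨m, hm⟩ : ∃ m, m = p.length := ⟨p.length, rfl⟩
    have hm0 : 0 < m := by rw [hm]; exact length_pos_iff.mpr hne
    rcases wpre hp with h1 | ⟨ha2, h1⟩ <;> rcases wsuf hs with h2 | ⟨hb2, h2⟩ <;>
      rw [← hm] at h1 h2
    · have c1 : p.count false = 0 := by rw [h1]; simp [count_replicate]
      have c2 : p.count false = m := by rw [h2]; simp [count_replicate]
      omega
    · have c1 : p.count false = 0 := by rw [h1]; simp [count_replicate]
      have c2 : p.count false = b := by rw [h2]; simp [count_replicate]
      omega
    · have c1 : p.count true = a := by rw [h1]; simp [count_replicate]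
      have c2 : p.count true = 0 := by rw [h2]; simp [count_replicate]
      omega
    · rw [← hm] at ha2 hb2
      have c1 : p.count false = m - a := by rw [h1]; simp [count_replicate]
      have c2 : p.count false = b := by rw [h2]; simp [count_replicate]
      exact hpv (by rw [h1, show m - a = b by omega])
  -- (N) w ∉ Vset k n
  have hN : w ∉ Vset k n := by
    intro hw
    obtain ⟨x, he, hlen, _, _, _, _⟩ := mem_struct hw
    have hℓ2 : 2 * k + 2 ≤ ℓ := by omega
    have hka1 : k + 1 ≤ a := by omega
    have hkw : k < w.length := by omega
    have e1 : w[k]'hkw = true := by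
      rw [gE_eq hwdef, getElem_append_left (by simpa)]
      exact getElem_replicate _
    have e2 : w[k]'hkw = false := by rw [gE_eq he]; exact vg_k
    rw [e1] at e2
    exact Bool.noConfusion e2
  -- (B) u ∈ Vset, v = w
  have hB : ∀ u ∈ Vset k n, CrossBF u w := by
    intro u hu p hne hpu hpw hpair
    obtain ⟨hp, hs⟩ := hpair
    obtain ⟨x, he, hulen, _, _, hav0, hav1⟩ := mem_struct hu
    subst he
    have hm : 0 < p.length := length_pos_iff.mpr hne
    have hp0 : p[0]'hm = true := by rw [hp.getElem hm]; exact vg_lo hk1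
    rcases wsuf hs with h2 | ⟨hb2, h2⟩
    · have : p[0]'hm = false := by rw [gE_eq h2]; exact getElem_replicate _
      rw [hp0] at this; exact Bool.noConfusion this
    · obtain ⟨m, hm2⟩ : ∃ m, m = p.length := ⟨p.length, rfl⟩
      rw [← hm2] at h2 hb2
      rcases lt_trichotomy (m - b) k with hc | hc | hc
      · have hcm : m - b < p.length := by omega
        have e1 : p[m - b]'hcm = false := by
          rw [gE_eq h2, getElem_append_right (by simp)]
          exact getElem_replicate _
        have e2 : p[m - b]'hcm = true := by rw [hp.getElem hcm]; exact vg_lo hc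
        rw [e1] at e2; exact Bool.noConfusion e2
      · obtain ⟨t, ht⟩ := hp
        rw [h2, hc, append_assoc] at ht
        exact no_zeros_prefix hkb ⟨t, append_cancel_left ht⟩ hav0
      · have hkm : k < p.length := by omega
        have e1 : p[k]'hkm = true := by
          rw [gE_eq h2, getElem_append_left (by simpa)]
          exact getElem_replicate _
        have e2 : p[k]'hkm = false := by rw [hp.getElem hkm]; exact vg_k
        rw [e1] at e2; exact Bool.noConfusion e2
  -- (C) u = w, v ∈ Vset
  have hC : ∀ v ∈ Vset k n, CrossBF w v := by
    intro v hv p hne hpw hpv hpair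
    obtain ⟨hp, hs⟩ := hpair
    obtain ⟨x, he, hvlen, _, _, hav0, hav1⟩ := mem_struct hv
    subst he
    have hm : 0 < p.length := length_pos_iff.mpr hne
    have hple : p.length ≤ 2 * k + (x.length + 2) := by
      have := hs.length_le; omega
    rcases wpre hp with h1 | ⟨ha2, h1⟩
    · have e1 : p[p.length - 1]'(by omega) = true := by
        rw [gE_eq h1]; exact getElem_replicate _
      have e2 := suffix_getElem' hs (i := p.length - 1)
        (j := 2 * k + (x.length + 2) - 1) (by omega) (by simp; omega) (by simp; omega)
      rw [e1, vg_hi (by omega) (by omega)] at e2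
      exact Bool.noConfusion e2
    · obtain ⟨m, hm2⟩ : ∃ m, m = p.length := ⟨p.length, rfl⟩
      rw [← hm2] at h1 ha2 hple
      have hm0 : 0 < m := by omega
      rcases lt_trichotomy (m - a) k with hc | hc | hc
      · -- index m - 1 - (m - a) = a - 1 in p is true, lands in final zero block of v
        have hia : a - 1 < p.length := by omega
        have e1 : p[a - 1]'hia = true := by
          rw [gE_eq h1, getElem_append_left (by simp; omega)]
          exact getElem_replicate _
        have e2 := suffix_getElem' hs (i := a - 1)
          (j := 2 * k + (x.length + 2) - m + (a - 1)) hia (by simp; omega) (by simp; omega)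
        rw [e1, vg_hi (by omega) (by omega)] at e2
        exact Bool.noConfusion e2
      · -- p = 1^a ++ 0^k is a suffix of v
        obtain ⟨t, ht⟩ := hs
        rw [h1, hc, ← append_assoc, ← append_assoc] at ht
        have := append_cancel_right ht
        exact no_ones_suffix hka ⟨t, this⟩ hav1
      · -- index m - 1 - k in p is false, lands on last char of z in v
        have hik : m - 1 - k < p.length := by omega
        have e1 : p[m - 1 - k]'hik = false := by
          rw [gE_eq h1, getElem_append_right (by simp; omega)]
          exact getElem_replicate _
        have e2 := suffix_getElem' hs (i := m - 1 - k)
          (j := k + (x.length + 1)) hik (by simp; omega) (by simp)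
        rw [e1, vg_zlast] at e2
        exact Bool.noConfusion e2
  -- (D) both in Vset
  have hD : ∀ u v : List Bool, u ∈ Vset k n → v ∈ Vset k n → CrossBF u v := by
    intro u v hu hv p hne hpu hpv hpair
    obtain ⟨hp, hs⟩ := hpair
    obtain ⟨xu, heu, hulen, _, _, havu0, havu1⟩ := mem_struct hu
    obtain ⟨xv, hev, hvlen, _, _, havv0, havv1⟩ := mem_struct hv
    subst heu
    subst hev
    have hm : 0 < p.length := length_pos_iff.mpr hne
    have hp0 : p[0]'hm = true := by rw [hp.getElem hm]; exact vg_lo hk1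
    have hvz : replicate k false <:+
        replicate k true ++ ((false :: (xv ++ [true])) ++ replicate k false) :=
      (suffix_append _ _).trans (suffix_append _ _)
    rcases le_or_gt p.length k with hle | hlt
    · have hrep := repl_suffix (suffix_of_suffix_length_le hs hvz (by simpa))
      have : p[0]'hm = false := by rw [gE_eq hrep]; exact getElem_replicate _
      rw [hp0] at this; exact Bool.noConfusion this
    have hsufk : replicate k false <:+ p :=
      suffix_of_suffix_length_le hvz hs (by simp; omega)
    have hprek : replicate k true <+: p :=
      prefix_of_prefix_length_le (prefix_append _ _) hp (by simp; omega)
    rcases lt_or_ge p.length (2 * k) with h2k | h2k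
    · have hik : p.length - k < p.length := by omega
      have e1 : p[p.length - k]'hik = true := by
        rw [← hprek.getElem (show p.length - k < (replicate k true).length by simp; omega)]
        exact getElem_replicate _
      have e2 := suffix_getElem' hsufk (i := 0) (j := p.length - k)
        (by simp; omega) (by simp) hik
      rw [getElem_replicate] at e2
      rw [e1] at e2; exact Bool.noConfusion e2
    · obtain ⟨q, hq⟩ := hprek
      have hqlen : k + q.length = p.length := by
        have := congrArg List.length hq; simp at this; omega
      have hq2 : q <+: (false :: (xu ++ [true])) ++ replicate k false := by
        obtain ⟨t, ht⟩ := hp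
        rw [← hq, append_assoc] at ht
        exact ⟨t, append_cancel_left ht⟩
      have hq3 : replicate k false <:+ q :=
        suffix_of_suffix_length_le hsufk ⟨replicate k true, hq⟩ (by simp; omega)
      have hmlt : p.length < 2 * k + (xu.length + 2) := by
        rcases lt_or_eq_of_le hp.length_le with h | h
        · omega
        · exact absurd (hp.eq_of_length h) hpu
      exact case_a_core hq2 hq3 (by omega) havu0
  refine ⟨hA, hN, ?_⟩
  intro u v hu hv
  rcases hu with hu | hu <;> rcases hv with hv | hv
  · exact hD u v hu hv
  · rw [Set.mem_singleton_iff] at hv; subst hv; exact hB u hu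
  · rw [Set.mem_singleton_iff] at hu; subst hu; exact hC v hv
  · rw [Set.mem_singleton_iff] at hu hv; subst hu; subst hv; exact hA
end

section
/- The set 𝒟_n = ⋃_{0 ≤ i ≤ ⌊(n−2)/2⌋} {1ω0 : ω a Dyck word of length 2i} is a non-overlapping set of strings: for any u, v ∈ 𝒟_n (possibly equal), no proper nonempty prefix of u equals a proper nonempty suffix of v. -/
open List

/-- A Dyck word over `{0,1}` (with `true = 1` an up-step): equal numbers of `1`s
and `0`s, and every prefix has at least as many `1`s as `0`s. -/
def IsDyck (w : List Bool) : Prop :=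
  w.count true = w.count false ∧
  ∀ p : List Bool, p <+: w → p.count false ≤ p.count true

/-- The rows `1ω0` with `ω` a Dyck word of length `2s - 2` (so rows of length `2s`). -/
def DRow (s : ℕ) : Set (List Bool) :=
  {w | ∃ ω : List Bool, IsDyck ω ∧ ω.length = 2 * s - 2 ∧ w = true :: (ω ++ [false])}

/-- The set `𝒟_n` of strings `1ω0` with `ω` a Dyck word of length `2i`,
`0 ≤ i ≤ ⌊(n-2)/2⌋`. -/
def Dset (n : ℕ) : Set (List Bool) :=
  {w | ∃ ω : List Bool, ∃ i : ℕ, IsDyck ω ∧ i ≤ (n - 2) / 2 ∧ ω.length = 2 * i ∧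
       w = true :: (ω ++ [false])}

/-- The matrices `M_{h,2s}` with `h` rows of the form `1ω0`, `ω ∈ D_{2s-2}`,
first row `T`, last row `B`, inner rows different from `T` and `B`. -/
def DMatSet (h s : ℕ) (T B : List Bool) : Set (List (List Bool)) :=
  {M | M.length = h ∧ M.head? = some T ∧ M.getLast? = some B ∧
       (∀ r ∈ M, r ∈ DRow s) ∧
       (∀ i : ℕ, ∀ r : List Bool, 0 < i → i + 1 < h → M[i]? = some r →
          r ≠ T ∧ r ≠ B)}


private lemma prefix_of_ne_concat {ω q : List Bool} (h : q <+: ω ++ [false])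
    (hne : q ≠ ω ++ [false]) : q <+: ω := by
  have hl : q.length < (ω ++ [false]).length := by
    cases (lt_or_eq_of_le h.length_le) with
    | inl h' => exact h'
    | inr h' => exact absurd (h.eq_of_length h') hne
  simp at hl
  exact prefix_of_prefix_length_le h (prefix_append _ _) (by omega)

private lemma suffix_concat_struct {p ω' : List Bool} (h : p <:+ ω' ++ [false])
    (hne : p ≠ []) : ∃ t, p = t ++ [false] ∧ t <:+ ω' := by
  have h1 : [false] <:+ p := by
    refine suffix_of_suffix_length_le (suffix_append _ _) h ?_
    cases p with
    | nil => exact absurd rfl hne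
    | cons a l => simp
  obtain ⟨t, rfl⟩ := h1
  obtain ⟨s, hs⟩ := h
  refine ⟨t, rfl, s, ?_⟩
  have : (s ++ t) ++ [false] = ω' ++ [false] := by simpa using hs
  exact List.append_cancel_right this

private lemma dyck_suffix_count {ω t : List Bool} (hω : IsDyck ω) (ht : t <:+ ω) :
    t.count true ≤ t.count false := by
  obtain ⟨s, rfl⟩ := ht
  have hs := hω.2 s (prefix_append _ _)
  have h1 : (s ++ t).count true = (s ++ t).count false := hω.1
  simp [List.count_append] at h1
  omega

/-- The set `𝒟_n` is a non-overlapping set of strings. -/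
theorem stmt_15 (n : ℕ) (u v : List Bool) (hu : u ∈ Dset n) (hv : v ∈ Dset n) :
    CrossBF u v := by
  obtain ⟨ω, i, hω, -, -, rfl⟩ := hu
  obtain ⟨ω', j, hω', -, -, rfl⟩ := hv
  rintro p hne hpu hpv ⟨hpre, hsuf⟩
  obtain ⟨q, rfl, hq⟩ : ∃ q, p = true :: q ∧ q <+: ω := by
    obtain ⟨r, hr⟩ := hpre
    cases p with
    | nil => exact absurd rfl hne
    | cons a q =>
      have ha : a = true := by
        have := congrArg (·.head?) hr
        simpa using this
      subst ha
      refine ⟨q, rfl, ?_⟩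
      refine prefix_of_ne_concat ⟨r, ?_⟩ ?_
      · simpa using hr
      · intro h; apply hpu; rw [h]
  have hsuf' : (true :: q) <:+ ω' ++ [false] := by
    rcases (List.suffix_cons_iff.mp hsuf) with h | h
    · exact absurd (by rw [h]) hpv
    · exact h
  obtain ⟨t, ht, hts⟩ := suffix_concat_struct hsuf' (by simp)
  have hc1 : q.count false ≤ q.count true := hω.2 q hq
  have hc2 : t.count true ≤ t.count false := dyck_suffix_count hω' hts
  have e1 : (true :: q).count true = q.count true + 1 := by simp
  have e2 : (true :: q).count false = q.count false := by simp
  have e3 : (t ++ [false]).count false = t.count false + 1 := by simp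
  have e4 : (t ++ [false]).count true = t.count true := by simp
  rw [ht] at e1 e2
  omega
end
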